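/- arXiv:1409.2077 — 9 statements merged into one kernel-verified Lean document; each statement's English description precedes it below -/
import Mathlib

section
/- Let S be a finite commutative semigroup. Then D(S) = d(S) + 1, where D(S) is the (large) Davenport constant and d(S) is the small Davenport constant of S. -/
/-- The product of a sequence (finite multiset) over a commutative semigroup, computed in
the monoid `WithOne S` obtained by adjoining an identity (the empty product is `1`). -/
def sgProd {S : Type*} [CommSemigroup S] (T : Multiset S) : WithOne S :=
  (T.map (fun s => (s : WithOne S))).prod

/-- `σ(T') = σ(T)` for sequences over a commutative semigroup, with the convention that
the sum of the empty sequence is the identity element of `S` when `S` has one. -/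
def SgProdEq {S : Type*} [CommSemigroup S] (T' T : Multiset S) : Prop :=
  sgProd T' = sgProd T ∨
    (T' = 0 ∧ ∃ e : S, (∀ s : S, e * s = s) ∧ sgProd T = (e : WithOne S))

/-- A sequence `T` over a commutative semigroup is reducible if it has a proper
subsequence `T'` (possibly empty when `S` has an identity) with `σ(T') = σ(T)`. -/
def SgReducible {S : Type*} [CommSemigroup S] (T : Multiset S) : Prop :=
  ∃ T' : Multiset S, T' ≤ T ∧ T' ≠ T ∧ SgProdEq T' T

/-- The (large) Davenport constant `D(S)` of a commutative semigroup: the least positive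
integer `ℓ` such that every sequence over `S` of length at least `ℓ` is reducible. -/
noncomputable def DavenportSg (S : Type*) [CommSemigroup S] : ℕ :=
  sInf {n : ℕ | 1 ≤ n ∧ ∀ T : Multiset S, n ≤ Multiset.card T → SgReducible T}

/-- The small Davenport constant `d(S)`: the least `ℓ ∈ ℕ₀` such that for every `m` and
all `a₁, …, a_m ∈ S` there is `I ⊆ [1, m]` with `|I| ≤ ℓ` and `∏_{i=1}^m a_i = ∏_{i∈I} a_i`
(an empty `I` being allowed when `S` has an identity, with the empty product convention). -/
noncomputable def smallDavenportSg (S : Type*) [CommSemigroup S] : ℕ :=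
  sInf {ℓ : ℕ | ∀ (m : ℕ) (a : Fin m → S), ∃ I : Finset (Fin m), I.card ≤ ℓ ∧
    ((∏ i ∈ I, ((a i : WithOne S))) = ∏ i, ((a i : WithOne S)) ∨
      (I = ∅ ∧ ∃ e : S, (∀ s : S, e * s = s) ∧
        (∏ i, ((a i : WithOne S))) = (e : WithOne S)))}

section DavAux

variable {S : Type*} [CommSemigroup S]

/-- The defining property of the small Davenport constant. -/
def DavProp (S : Type*) [CommSemigroup S] (ℓ : ℕ) : Prop :=
  ∀ (m : ℕ) (a : Fin m → S), ∃ I : Finset (Fin m), I.card ≤ ℓ ∧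
    ((∏ i ∈ I, ((a i : WithOne S))) = ∏ i, ((a i : WithOne S)) ∨
      (I = ∅ ∧ ∃ e : S, (∀ s : S, e * s = s) ∧
        (∏ i, ((a i : WithOne S))) = (e : WithOne S)))

lemma dav_sgProd_eq (T : Multiset S) :
    sgProd T = (Multiset.map (fun s => WithOne.coe s) T).prod := by
  simp [sgProd]

lemma dav_sgProd_add (T₁ T₂ : Multiset S) : sgProd (T₁ + T₂) = sgProd T₁ * sgProd T₂ := by
  simp [sgProd]

lemma dav_sgProd_exists_coe {T : Multiset S} (hT : T ≠ 0) :
    ∃ s : S, sgProd T = (s : WithOne S) := by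
  induction T using Multiset.induction_on with
  | empty => exact absurd rfl hT
  | cons a T ih =>
    rcases eq_or_ne T 0 with rfl | h
    · exact ⟨a, by simp [sgProd]⟩
    · obtain ⟨s, hs⟩ := ih h
      refine ⟨a * s, ?_⟩
      rw [show sgProd (a ::ₘ T) = (a : WithOne S) * sgProd T by simp [sgProd], hs,
        WithOne.coe_mul]

lemma dav_sgProd_finsetMap {m : ℕ} (I : Finset (Fin m)) (a : Fin m → S) :
    sgProd (I.val.map a) = ∏ i ∈ I, ((a i : WithOne S)) := by
  rw [dav_sgProd_eq, Multiset.map_map, Finset.prod_eq_multiset_prod]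
  rfl

lemma dav_exists_map_eq_of_le {α β : Type*} {f : α → β} :
    ∀ {u : Multiset β} {s : Multiset α}, u ≤ s.map f → ∃ t : Multiset α, t ≤ s ∧ t.map f = u := by
  intro u
  induction u using Multiset.induction_on with
  | empty => exact fun _ => ⟨0, Multiset.zero_le _, rfl⟩
  | cons b u ih =>
    intro s h
    classical
    have hb : b ∈ s.map f := Multiset.mem_of_le h (Multiset.mem_cons_self _ _)
    obtain ⟨a, ha, rfl⟩ := Multiset.mem_map.1 hb
    have h' : u ≤ (s.erase a).map f := by
      rw [Multiset.map_erase_of_mem f s ha]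
      have h2 := Multiset.erase_le_erase (f a) h
      rwa [Multiset.erase_cons_head] at h2
    obtain ⟨t, ht, rfl⟩ := ih h'
    refine ⟨a ::ₘ t, ?_, by rw [Multiset.map_cons]⟩
    have h3 := Multiset.cons_le_cons a ht
    rwa [Multiset.cons_erase ha] at h3

lemma dav_key_slice [Fintype S] (l : List S) (h : Fintype.card S < l.length) :
    ∃ T' : Multiset S, T' ≤ (↑l : Multiset S) ∧ Multiset.card T' < l.length ∧
      sgProd T' = sgProd (↑l : Multiset S) := by
  have h1 : ∀ k : Fin (Fintype.card S + 1),
      ∃ s : S, sgProd (↑(l.take (k.val + 1)) : Multiset S) = (s : WithOne S) := by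
    intro k
    apply dav_sgProd_exists_coe
    rw [Ne, Multiset.coe_eq_zero, ← List.length_eq_zero_iff, List.length_take]
    omega
  choose F hF using h1
  obtain ⟨i, j, hlt, hij⟩ : ∃ i j : Fin (Fintype.card S + 1), i < j ∧ F i = F j := by
    obtain ⟨i, j, hne, hij⟩ := Fintype.exists_ne_map_eq_of_card_lt F (by simp)
    rcases hne.lt_or_gt with h2 | h2
    · exact ⟨i, j, h2, hij⟩
    · exact ⟨j, i, h2, hij.symm⟩
  have hivj : (i : ℕ) < (j : ℕ) := hlt
  have hjlen : (j : ℕ) + 1 ≤ l.length := by have := j.isLt; omega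
  have hdec : (↑l : Multiset S) = ↑(l.take ((j : ℕ) + 1)) + ↑(l.drop ((j : ℕ) + 1)) := by
    conv_lhs => rw [← List.take_append_drop ((j : ℕ) + 1) l]
    exact (Multiset.coe_add _ _).symm
  refine ⟨↑(l.take ((i : ℕ) + 1)) + ↑(l.drop ((j : ℕ) + 1)), ?_, ?_, ?_⟩
  · rw [hdec]
    apply add_le_add_left
    rw [Multiset.coe_le]
    have htt : l.take ((i : ℕ) + 1) = (l.take ((j : ℕ) + 1)).take ((i : ℕ) + 1) := by
      rw [List.take_take, min_eq_left (by omega)]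
    rw [htt]
    exact (List.take_sublist _ _).subperm
  · simp only [Multiset.card_add, Multiset.coe_card, List.length_take, List.length_drop]
    omega
  · have hFi := hF i
    have hFj := hF j
    rw [dav_sgProd_add, hFi, hij, ← hFj, ← dav_sgProd_add]
    rw [← hdec]

lemma dav_exists_small [Fintype S] (T : Multiset S) :
    ∃ T' : Multiset S, T' ≤ T ∧ Multiset.card T' ≤ Fintype.card S ∧ sgProd T' = sgProd T := by
  induction T using Multiset.strongInductionOn with
  | _ T ih =>
    rcases le_or_gt (Multiset.card T) (Fintype.card S) with h | h
    · exact ⟨T, le_refl _, h, rfl⟩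
    · obtain ⟨T'', hle, hcard, hprod⟩ := dav_key_slice T.toList
        (by rw [Multiset.length_toList]; exact h)
      rw [Multiset.coe_toList] at hle hprod
      rw [Multiset.length_toList] at hcard
      have hlt : T'' < T := lt_of_le_of_ne hle (by rintro rfl; exact lt_irrefl _ hcard)
      obtain ⟨T', h1, h2, h3⟩ := ih T'' hlt
      exact ⟨T', h1.trans hle, h2, h3.trans hprod⟩

lemma dav_prop_card [Fintype S] : DavProp S (Fintype.card S) := by
  intro m a
  obtain ⟨T', hle, hcard, hprod⟩ := dav_exists_small (Multiset.map a Finset.univ.val)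
  obtain ⟨t, ht, rfl⟩ := dav_exists_map_eq_of_le hle
  have htnodup : t.Nodup := Multiset.nodup_of_le ht Finset.univ.nodup
  refine ⟨⟨t, htnodup⟩, ?_, Or.inl ?_⟩
  · rw [Finset.card_mk]
    rw [Multiset.card_map] at hcard
    exact hcard
  · calc ∏ i ∈ (⟨t, htnodup⟩ : Finset (Fin m)), ((a i : WithOne S))
        = sgProd (Multiset.map a t) := (dav_sgProd_finsetMap ⟨t, htnodup⟩ a).symm
      _ = sgProd (Multiset.map a Finset.univ.val) := hprod
      _ = ∏ i, ((a i : WithOne S)) := dav_sgProd_finsetMap Finset.univ a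

lemma dav_reducible {ℓ : ℕ} (hℓ : DavProp S ℓ) (T : Multiset S)
    (hT : ℓ + 1 ≤ Multiset.card T) : SgReducible T := by
  obtain ⟨I, hcard, hI⟩ := hℓ T.toList.length T.toList.get
  have huniv : Multiset.map T.toList.get Finset.univ.val = T := by
    rw [Fin.univ_val_map, List.ofFn_get, Multiset.coe_toList]
  have hIval : I.card = Multiset.card I.val := rfl
  refine ⟨Multiset.map T.toList.get I.val, ?_, ?_, ?_⟩
  · have h7 : Multiset.map T.toList.get I.val ≤ Multiset.map T.toList.get Finset.univ.val :=
      Multiset.map_le_map (Finset.val_le_iff.2 (Finset.subset_univ I))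
    rwa [huniv] at h7
  · intro he
    have hc : Multiset.card (Multiset.map T.toList.get I.val) = Multiset.card T := by rw [he]
    rw [Multiset.card_map] at hc
    omega
  · rcases hI with h | ⟨hIe, e, he, hp⟩
    · left
      calc sgProd (Multiset.map T.toList.get I.val)
          = ∏ i ∈ I, ((T.toList.get i : WithOne S)) := dav_sgProd_finsetMap I _
        _ = ∏ i, ((T.toList.get i : WithOne S)) := h
        _ = sgProd (Multiset.map T.toList.get Finset.univ.val) :=
            (dav_sgProd_finsetMap Finset.univ _).symm
        _ = sgProd T := by rw [huniv]
    · right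
      refine ⟨by rw [hIe]; simp, e, he, ?_⟩
      calc sgProd T = sgProd (Multiset.map T.toList.get Finset.univ.val) := by rw [huniv]
        _ = ∏ i, ((T.toList.get i : WithOne S)) := dav_sgProd_finsetMap Finset.univ _
        _ = (e : WithOne S) := hp

lemma dav_prop_of_reducible {n : ℕ} (hn1 : 1 ≤ n)
    (hn2 : ∀ T : Multiset S, n ≤ Multiset.card T → SgReducible T) : DavProp S (n - 1) := by
  intro m a
  classical
  set K : Set ℕ := {k | ∃ I : Finset (Fin m),
    (((∏ i ∈ I, ((a i : WithOne S))) = ∏ i, ((a i : WithOne S))) ∨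
      (I = ∅ ∧ ∃ e : S, (∀ s : S, e * s = s) ∧
        (∏ i, ((a i : WithOne S))) = (e : WithOne S))) ∧ I.card = k} with hK
  have hKne : K.Nonempty := ⟨Finset.univ.card, Finset.univ, Or.inl rfl, rfl⟩
  obtain ⟨I, hQI, hcard⟩ := Nat.sInf_mem hKne
  by_cases hle : sInf K ≤ n - 1
  · exact ⟨I, by omega, hQI⟩
  · exfalso
    have hnI : n ≤ I.card := by omega
    have hprodI : (∏ i ∈ I, ((a i : WithOne S))) = ∏ i, ((a i : WithOne S)) := by
      rcases hQI with h | ⟨hIe, _⟩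
      · exact h
      · rw [hIe, Finset.card_empty] at hcard
        omega
    have hIval : I.card = Multiset.card I.val := rfl
    obtain ⟨T'', hle'', hne'', heq''⟩ := hn2 (Multiset.map a I.val)
      (by rw [Multiset.card_map]; omega)
    obtain ⟨t, ht, rfl⟩ := dav_exists_map_eq_of_le hle''
    have htnodup : t.Nodup := Multiset.nodup_of_le ht I.nodup
    have hJlt : Multiset.card t < I.card := by
      have h5 : Multiset.map a t < Multiset.map a I.val := lt_of_le_of_ne hle'' hne''
      have h6 := Multiset.card_lt_card h5
      rw [Multiset.card_map, Multiset.card_map] at h6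
      omega
    rcases heq'' with h | ⟨ht0, e, he, hp⟩
    · have hmem : Multiset.card t ∈ K := by
        refine ⟨⟨t, htnodup⟩, Or.inl ?_, rfl⟩
        calc ∏ i ∈ (⟨t, htnodup⟩ : Finset (Fin m)), ((a i : WithOne S))
            = sgProd (Multiset.map a t) := (dav_sgProd_finsetMap ⟨t, htnodup⟩ a).symm
          _ = sgProd (Multiset.map a I.val) := h
          _ = ∏ i ∈ I, ((a i : WithOne S)) := dav_sgProd_finsetMap I a
          _ = ∏ i, ((a i : WithOne S)) := hprodI
      have := Nat.sInf_le hmem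
      omega
    · have hmem : (0 : ℕ) ∈ K := by
        refine ⟨∅, Or.inr ⟨rfl, e, he, ?_⟩, Finset.card_empty⟩
        calc ∏ i, ((a i : WithOne S)) = ∏ i ∈ I, ((a i : WithOne S)) := hprodI.symm
          _ = sgProd (Multiset.map a I.val) := (dav_sgProd_finsetMap I a).symm
          _ = (e : WithOne S) := hp
      have := Nat.sInf_le hmem
      omega

end DavAux

/-- For a finite commutative semigroup `S`, `D(S) = d(S) + 1`. -/
theorem davenport_eq_small_davenport_add_one {S : Type*} [CommSemigroup S] [Finite S] :
    DavenportSg S = smallDavenportSg S + 1 := by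
  cases nonempty_fintype S
  have hd : DavProp S (smallDavenportSg S) := by
    have h0 : ({ℓ : ℕ | DavProp S ℓ}).Nonempty := ⟨Fintype.card S, dav_prop_card⟩
    exact Nat.sInf_mem h0
  have hmem : (smallDavenportSg S + 1) ∈
      {n : ℕ | 1 ≤ n ∧ ∀ T : Multiset S, n ≤ Multiset.card T → SgReducible T} :=
    ⟨Nat.succ_le_succ (Nat.zero_le _), fun T hT => dav_reducible hd T hT⟩
  have hDne : ({n : ℕ | 1 ≤ n ∧ ∀ T : Multiset S,
      n ≤ Multiset.card T → SgReducible T}).Nonempty := ⟨_, hmem⟩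
  have hDmem : DavenportSg S ∈ {n : ℕ | 1 ≤ n ∧ ∀ T : Multiset S,
      n ≤ Multiset.card T → SgReducible T} := Nat.sInf_mem hDne
  obtain ⟨h1, h2⟩ := hDmem
  have h3 : smallDavenportSg S ≤ DavenportSg S - 1 := by
    apply Nat.sInf_le
    show DavProp S (DavenportSg S - 1)
    exact dav_prop_of_reducible h1 h2
  have h4 : DavenportSg S ≤ smallDavenportSg S + 1 := Nat.sInf_le hmem
  omega
end

section
/- Let G be a finite abelian group and let K_0 ≤ K_1 ≤ ⋯ ≤ K_t be a strictly increasing chain of subgroups of G (K_{i−1} a proper subgroup of K_i for each i ∈ [1,t]) with K_0 the trivial subgroup. Then D(G/K_t) ≤ D(G) − t. -/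
/-- The classical Davenport constant of a finite abelian group: the least positive
integer `ℓ` such that every sequence (finite multiset) of elements of `G` of length at
least `ℓ` has a nonempty subsequence whose product is the identity. -/
noncomputable def DavenportG (G : Type*) [CommGroup G] : ℕ :=
  sInf {n : ℕ | 1 ≤ n ∧ ∀ T : Multiset G, n ≤ Multiset.card T →
    ∃ T' : Multiset G, T' ≤ T ∧ T' ≠ 0 ∧ T'.prod = 1}


def DSet (A : Type*) [CommGroup A] : Set ℕ :=
  {n : ℕ | 1 ≤ n ∧ ∀ T : Multiset A, n ≤ Multiset.card T →
    ∃ T' : Multiset A, T' ≤ T ∧ T' ≠ 0 ∧ T'.prod = 1}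

section aux
variable {A B : Type*} [CommGroup A] [CommGroup B]

lemma prefix_prod_eq {l : List A} {i j : ℕ} (hij : i < j) (hj : j ≤ l.length)
    (hp : (l.take i).prod = (l.take j).prod) :
    ∃ s : List A, s ≠ [] ∧ s.Sublist l ∧ s.prod = 1 := by
  refine ⟨(l.drop i).take (j - i), ?_, ?_, ?_⟩
  · have : ((l.drop i).take (j - i)).length = j - i := by
      rw [List.length_take, List.length_drop]; omega
    intro h; rw [h] at this; simp at this; omega
  · exact ((l.drop i).take_sublist _).trans (l.drop_sublist i)
  · have h1 : l.take j = l.take i ++ (l.drop i).take (j - i) := by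
      rw [← List.take_add]; congr 1; omega
    rw [h1, List.prod_append] at hp
    exact (left_eq_mul.mp hp)

lemma card_mem_DSet [Finite A] : Nat.card A ∈ DSet A := by
  refine ⟨Nat.one_le_iff_ne_zero.mpr Nat.card_pos.ne', ?_⟩
  intro T hT
  set l := T.toList with hl
  have hlen : Nat.card A ≤ l.length := by
    simpa [hl, Multiset.length_toList] using hT
  have : Fintype A := Fintype.ofFinite A
  have hcard : Fintype.card A < Fintype.card (Fin (l.length + 1)) := by
    rw [Fintype.card_fin]
    have := Nat.card_eq_fintype_card (α := A)
    omega
  obtain ⟨i, j, hij, hf⟩ :=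
    Fintype.exists_ne_map_eq_of_card_lt
      (fun i : Fin (l.length + 1) => (l.take (i : ℕ)).prod) hcard
  have key : ∃ s : List A, s ≠ [] ∧ s.Sublist l ∧ s.prod = 1 := by
    rcases lt_or_gt_of_ne (fun h => hij (Fin.ext h) : (i : ℕ) ≠ j) with h | h
    · exact prefix_prod_eq h (by omega) hf
    · exact prefix_prod_eq h (by omega) hf.symm
  obtain ⟨s, hne, hsub, hprod⟩ := key
  refine ⟨(s : Multiset A), ?_, by simpa using hne, by simpa using hprod⟩
  have : (s : Multiset A) ≤ (l : Multiset A) := Multiset.coe_le.mpr hsub.subperm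
  simpa [hl, Multiset.coe_toList] using this

lemma DSet_nonempty [Finite A] : (DSet A).Nonempty := ⟨_, card_mem_DSet⟩

lemma sInf_mem_DSet [Finite A] : sInf (DSet A) ∈ DSet A := Nat.sInf_mem DSet_nonempty

lemma card_lt_of_bad [Finite A] {T : Multiset A}
    (h : ∀ S ≤ T, S ≠ 0 → S.prod ≠ 1) : Multiset.card T < sInf (DSet A) := by
  by_contra h'
  push_neg at h'
  obtain ⟨S, hle, hne, hp⟩ := (sInf_mem_DSet (A := A)).2 T h'
  exact h S hle hne hp

lemma DSet_subset (e : A ≃* B) : DSet B ⊆ DSet A := by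
  rintro n ⟨h1, h2⟩
  refine ⟨h1, fun T hT => ?_⟩
  obtain ⟨S, hle, hne, hp⟩ := h2 (T.map e) (by simpa using hT)
  refine ⟨S.map e.symm, ?_, by simpa using hne, ?_⟩
  · have := Multiset.map_le_map (f := (e.symm : B → A)) hle
    simpa [Multiset.map_map, Function.comp_def] using this
  · have h3 := map_multiset_prod (MulEquiv.toMonoidHom e.symm) S
    simp only [MulEquiv.coe_toMonoidHom] at h3
    rw [← h3, hp, map_one]

lemma davenport_congr (e : A ≃* B) : sInf (DSet A) = sInf (DSet B) := by
  rw [Set.Subset.antisymm (DSet_subset e.symm) (DSet_subset e)]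

lemma davenport_quotient_succ [Finite A] (H : Subgroup A) (hH : H ≠ ⊥) :
    sInf (DSet (A ⧸ H)) + 1 ≤ sInf (DSet A) := by
  obtain ⟨h, hhH, hh1⟩ : ∃ h ∈ H, h ≠ 1 := by
    rcases H.bot_or_exists_ne_one with hb | ⟨x, hx, hx1⟩
    · exact absurd hb hH
    · exact ⟨x, hx, hx1⟩
  set D' := sInf (DSet (A ⧸ H)) with hD'
  have hD'pos : 1 ≤ D' := (sInf_mem_DSet (A := A ⧸ H)).1
  obtain ⟨T', hcard, hbad⟩ : ∃ T' : Multiset (A ⧸ H),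
      D' - 1 ≤ Multiset.card T' ∧ ∀ S ≤ T', S ≠ 0 → S.prod ≠ 1 := by
    rcases eq_or_lt_of_le hD'pos with h1 | h1
    · exact ⟨0, by omega, fun S hS hS0 => absurd (Multiset.le_zero.mp hS) hS0⟩
    · have hnm : D' - 1 ∉ DSet (A ⧸ H) := Nat.notMem_of_lt_sInf (by omega)
      simp only [DSet, Set.mem_setOf_eq, not_and, not_forall] at hnm
      obtain ⟨T', hT', hcontra⟩ := hnm (by omega)
      push_neg at hcontra
      exact ⟨T', hT', fun S hS h0 => (hcontra S hS h0)⟩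
  set T₀ : Multiset A := T'.map Quotient.out with hT₀
  have hout : ∀ x : A ⧸ H, (QuotientGroup.mk x.out : A ⧸ H) = x := fun x =>
    QuotientGroup.out_eq' x
  have hmap : T₀.map (QuotientGroup.mk' H) = T' := by
    simp [hT₀, Multiset.map_map, Function.comp_def, hout]
  set T : Multiset A := h ::ₘ T₀ with hT
  have hbadT : ∀ S ≤ T, S ≠ 0 → S.prod ≠ 1 := by
    classical
    intro S hS hS0 hSp
    by_cases hhS : h ∈ S
    · obtain ⟨S', rfl⟩ : ∃ S', S = h ::ₘ S' := ⟨S.erase h, (Multiset.cons_erase hhS).symm⟩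
      have hS' : S' ≤ T₀ := by
        rwa [hT, Multiset.cons_le_cons_iff] at hS
      rcases eq_or_ne S' 0 with rfl | hS'0
      · simp at hSp; exact hh1 hSp
      · apply hbad (S'.map (QuotientGroup.mk' H))
          (hmap ▸ Multiset.map_le_map hS') (by simpa using hS'0)
        rw [← map_multiset_prod]
        have : S'.prod = h⁻¹ := by
          rw [Multiset.prod_cons] at hSp
          exact eq_inv_of_mul_eq_one_right hSp
        rw [this]
        simpa [QuotientGroup.eq_one_iff] using H.inv_mem hhH
    · have hST₀ : S ≤ T₀ := by
        rw [Multiset.le_iff_count]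
        intro b
        have := Multiset.le_iff_count.mp hS b
        rcases eq_or_ne b h with rfl | hb
        · rw [Multiset.count_eq_zero_of_notMem hhS]; exact Nat.zero_le _
        · simpa [hT, Multiset.count_cons, hb] using this
      apply hbad (S.map (QuotientGroup.mk' H))
        (hmap ▸ Multiset.map_le_map hST₀) (by simpa using hS0)
      rw [← map_multiset_prod, hSp, map_one]
  have hlt := card_lt_of_bad hbadT
  have hcT : Multiset.card T = Multiset.card T' + 1 := by
    rw [hT, Multiset.card_cons, hT₀, Multiset.card_map]
  omega

end aux

lemma davenportG_eq (A : Type*) [CommGroup A] : DavenportG A = sInf (DSet A) := rfl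

/-- If `K 0 < K 1 < ⋯ < K t` is a strictly increasing chain of subgroups of a finite
abelian group `G` with `K 0` trivial, then `D(G / K t) ≤ D(G) − t`. -/
theorem davenport_quotient_chain_le {G : Type*} [CommGroup G] [Finite G]
    (t : ℕ) (K : ℕ → Subgroup G) (hK0 : K 0 = ⊥)
    (hchain : ∀ i, i < t → K i < K (i + 1)) :
    DavenportG (G ⧸ K t) + t ≤ DavenportG G := by
  have main : ∀ s : ℕ, (∀ i, i < s → K i < K (i + 1)) →
      DavenportG (G ⧸ K s) + s ≤ DavenportG G := by
    intro s
    induction s with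
    | zero =>
      intro _
      rw [davenportG_eq, davenportG_eq, hK0]
      simp [davenport_congr (QuotientGroup.quotientBot (G := G))]
    | succ s ih =>
      intro hc
      have ih' := ih (fun i hi => hc i (by omega))
      have hsub : K s ≤ K (s + 1) := (hc s (by omega)).le
      have e := QuotientGroup.quotientQuotientEquivQuotient (K s) (K (s + 1)) hsub
      have hne : (K (s + 1)).map (QuotientGroup.mk' (K s)) ≠ ⊥ := by
        obtain ⟨x, hx1, hx0⟩ := SetLike.exists_of_lt (hc s (by omega))
        intro hb
        have hmem : QuotientGroup.mk' (K s) x ∈ (K (s + 1)).map (QuotientGroup.mk' (K s)) :=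
          Subgroup.mem_map_of_mem _ hx1
        rw [hb, Subgroup.mem_bot] at hmem
        exact hx0 ((QuotientGroup.eq_one_iff x).mp hmem)
      have key := davenport_quotient_succ ((K (s + 1)).map (QuotientGroup.mk' (K s))) hne
      have hco := davenport_congr e
      rw [davenportG_eq, davenportG_eq] at ih' ⊢
      omega
  exact main t hchain
end

section
/- Let F_q be a finite field, f a nonconstant monic polynomial in F_q[x], and R = F_q[x]/(f). For a, b ∈ R with representing polynomials θ_a, θ_b ∈ F_q[x], the following are equivalent: a H b in the Green's congruence of the multiplicative monoid of R, if and only if gcd(θ_a, f) = gcd(θ_b, f) in F_q[x]. -/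
open Polynomial

/-- Green's preorder on the multiplicative monoid of a commutative ring:
`a ≤_H b` iff `a = b` or `a = b * c` for some `c`. -/
def GreenLe {S : Type*} [CommMonoid S] (a b : S) : Prop :=
  a = b ∨ ∃ c : S, a = b * c

/-- Green's congruence: `a H b` iff `a ≤_H b` and `b ≤_H a`. -/
def GreenEq {S : Type*} [CommMonoid S] (a b : S) : Prop :=
  GreenLe a b ∧ GreenLe b a

lemma greenLe_iff_dvd {S : Type*} [CommMonoid S] (a b : S) : GreenLe a b ↔ b ∣ a := by
  constructor
  · rintro (rfl | ⟨c, rfl⟩)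
    · exact dvd_refl a
    · exact Dvd.intro c rfl
  · rintro ⟨c, rfl⟩
    exact Or.inr ⟨c, rfl⟩

lemma mk_dvd_iff_gcd_dvd {F : Type*} [Field F] [DecidableEq F]
    (f θa θb : Polynomial F) :
    (Ideal.Quotient.mk (Ideal.span {f}) θb ∣ Ideal.Quotient.mk (Ideal.span {f}) θa) ↔
      gcd θb f ∣ θa := by
  constructor
  · rintro ⟨c, hc⟩
    obtain ⟨θc, rfl⟩ := Ideal.Quotient.mk_surjective c
    rw [← map_mul, Ideal.Quotient.eq, Ideal.mem_span_singleton] at hc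
    obtain ⟨g, hg⟩ := hc
    have : θa = θb * θc + f * g := by linear_combination hg
    rw [this]
    exact dvd_add (Dvd.dvd.mul_right (gcd_dvd_left θb f) θc)
      (Dvd.dvd.mul_right (gcd_dvd_right θb f) g)
  · intro h
    have hD : EuclideanDomain.gcd θb f ∣ θa :=
      dvd_trans (dvd_gcd (EuclideanDomain.gcd_dvd_left θb f)
        (EuclideanDomain.gcd_dvd_right θb f)) h
    obtain ⟨u, hu⟩ := hD
    refine ⟨Ideal.Quotient.mk _ (EuclideanDomain.gcdA θb f * u), ?_⟩
    rw [← map_mul, Ideal.Quotient.eq, Ideal.mem_span_singleton]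
    refine ⟨EuclideanDomain.gcdB θb f * u, ?_⟩
    have hbez := EuclideanDomain.gcd_eq_gcd_ab θb f
    linear_combination hu + u * hbez

/-- Let `F` be a finite field, `f` a nonconstant monic polynomial over `F`, and
`R = F[x]/(f)`.  For `a, b ∈ R` with representing polynomials `θa, θb`, one has `a H b`
in the Green's congruence of the multiplicative monoid of `R` if and only if the (monic)
gcds `gcd(θa, f)` and `gcd(θb, f)` coincide. -/
theorem greenEq_iff_gcd_eq {F : Type*} [Field F] [Fintype F] [DecidableEq F]
    (f : Polynomial F) (hmonic : f.Monic) (hdeg : 0 < f.degree)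
    (a b : Polynomial F ⧸ Ideal.span {f}) (θa θb : Polynomial F)
    (ha : Ideal.Quotient.mk (Ideal.span {f}) θa = a)
    (hb : Ideal.Quotient.mk (Ideal.span {f}) θb = b) :
    GreenEq a b ↔ gcd θa f = gcd θb f := by
  subst ha hb
  rw [GreenEq, greenLe_iff_dvd, greenLe_iff_dvd, mk_dvd_iff_gcd_dvd, mk_dvd_iff_gcd_dvd]
  constructor
  · rintro ⟨h1, h2⟩
    exact dvd_antisymm_of_normalize_eq (normalize_gcd _ _) (normalize_gcd _ _)
      (dvd_gcd h2 (gcd_dvd_right θa f)) (dvd_gcd h1 (gcd_dvd_right θb f))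
  · intro h
    exact ⟨h ▸ gcd_dvd_left θa f, h ▸ gcd_dvd_left θb f⟩
end

section
/- Let q > 2 be a prime power, F_q the finite field with q elements, f a nonconstant monic polynomial in F_q[x], and R = F_q[x]/(f). For a, b ∈ R, the following are equivalent: a H b in the Green's congruence of the multiplicative monoid of R, if and only if St_{U}(a) = St_{U}(b), where U is the group of units of R and St_U(c) = {u ∈ U : u·c = c}. -/
open Polynomial

section Helpers

variable {F : Type*} [Field F] [DecidableEq F]

open EuclideanDomain UniqueFactorizationMonoid

/-- Annihilator description: `t·(A mod f) = 0` iff `f/gcd(A,f) ∣ t`. -/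
lemma green_ann_iff {f : F[X]} (hf : f ≠ 0) (A t : F[X]) :
    Ideal.Quotient.mk (Ideal.span {f}) (t * A) = 0 ↔ f / EuclideanDomain.gcd A f ∣ t := by
  classical
  set g := EuclideanDomain.gcd A f with hg
  have hg0 : g ≠ 0 := fun h0 => hf (EuclideanDomain.gcd_eq_zero_iff.mp h0).2
  obtain ⟨h, hfh⟩ : g ∣ f := EuclideanDomain.gcd_dvd_right A f
  obtain ⟨A', hA'⟩ : g ∣ A := EuclideanDomain.gcd_dvd_left A f
  have hdiv : f / g = h := (EuclideanDomain.eq_div_of_mul_eq_right hg0 hfh.symm).symm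
  have hbez := EuclideanDomain.gcd_eq_gcd_ab A f
  set x := EuclideanDomain.gcdA A f
  set y := EuclideanDomain.gcdB A f
  have hco : IsCoprime h A' := by
    refine ⟨y, x, ?_⟩
    have : g * 1 = g * (y * h + x * A') := by
      rw [mul_one]
      calc g = A * x + f * y := hbez
        _ = g * A' * x + g * h * y := by rw [← hA', ← hfh]
        _ = g * (y * h + x * A') := by ring
    exact (mul_left_cancel₀ hg0 this).symm
  rw [hdiv, Ideal.Quotient.eq_zero_iff_mem, Ideal.mem_span_singleton]
  constructor
  · intro hd
    rw [hfh, hA'] at hd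
    have hd' : g * h ∣ g * (t * A') := by rwa [mul_left_comm] at hd
    have : h ∣ t * A' := (mul_dvd_mul_iff_left hg0).mp hd'
    exact hco.dvd_of_dvd_mul_right this
  · rintro ⟨u, rfl⟩
    exact ⟨u * A', by rw [hfh, hA']; ring⟩

lemma green_isUnit_mk {f c : F[X]} (h : IsCoprime c f) :
    IsUnit (Ideal.Quotient.mk (Ideal.span {f}) c) := by
  obtain ⟨u, v, huv⟩ := h
  have hf0 : Ideal.Quotient.mk (Ideal.span {f}) f = 0 :=
    Ideal.Quotient.eq_zero_iff_mem.mpr (Ideal.mem_span_singleton_self f)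
  refine IsUnit.of_mul_eq_one (Ideal.Quotient.mk _ u) ?_
  have := congrArg (Ideal.Quotient.mk (Ideal.span {f})) huv
  rw [map_add, map_mul, map_mul, map_one, hf0, mul_zero, add_zero] at this
  rw [mul_comm]; exact this

lemma green_coprime_of_factors {f c : F[X]} (hf : f ≠ 0)
    (h : ∀ p ∈ normalizedFactors f, ¬ p ∣ c) : IsCoprime c f := by
  classical
  rw [← EuclideanDomain.gcd_isUnit_iff]
  by_contra hu
  have hd0 : EuclideanDomain.gcd c f ≠ 0 :=
    fun h0 => hf (EuclideanDomain.gcd_eq_zero_iff.mp h0).2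
  obtain ⟨p, hpirr, hpd⟩ := WfDvdMonoid.exists_irreducible_factor hu hd0
  have hpf : p ∣ f := hpd.trans (EuclideanDomain.gcd_dvd_right c f)
  obtain ⟨q, hq, hassoc⟩ := exists_mem_normalizedFactors_of_dvd hf hpirr hpf
  exact h q hq (hassoc.symm.dvd.trans (hpd.trans (EuclideanDomain.gcd_dvd_left c f)))

/-- Chinese remainder: we can choose `s` with prescribed residues modulo each
normalized prime factor of `f`. -/
lemma green_crt {f : F[X]} (hf : f ≠ 0) (t : F[X] → F[X]) :
    ∃ s : F[X], ∀ p ∈ normalizedFactors f, p ∣ (s - t p) := by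
  classical
  set P := (normalizedFactors f).toFinset with hP
  have hprime : ∀ p ∈ P, Prime p := fun p hp =>
    prime_of_normalized_factor p (Multiset.mem_toFinset.mp hp)
  have hcop : Pairwise (Function.onFun IsCoprime fun p : P => Ideal.span {(p : F[X])}) := by
    intro i j hij
    rw [Function.onFun, Ideal.isCoprime_span_singleton_iff]
    have hi := hprime i i.2
    have hj := hprime j j.2
    rw [hi.coprime_iff_not_dvd]
    intro hdvd
    have hassoc : Associated (i : F[X]) (j : F[X]) :=
      hi.irreducible.associated_of_dvd hj.irreducible hdvd
    have : (i : F[X]) = j := by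
      rw [← normalize_normalized_factor _ (Multiset.mem_toFinset.mp i.2),
        ← normalize_normalized_factor _ (Multiset.mem_toFinset.mp j.2)]
      exact normalize_eq_normalize hassoc.dvd hassoc.symm.dvd
    exact hij (Subtype.ext this)
  obtain ⟨s', hs'⟩ := Ideal.quotientInfToPiQuotient_surj hcop
    (fun i => Ideal.Quotient.mk _ (t i))
  obtain ⟨s, rfl⟩ := Ideal.Quotient.mk_surjective s'
  refine ⟨s, fun p hp => ?_⟩
  have := congrFun hs' ⟨p, Multiset.mem_toFinset.mpr hp⟩
  rw [Ideal.quotientInfToPiQuotient_mk'] at this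
  rw [← Ideal.mem_span_singleton]
  exact (Ideal.Quotient.eq).mp this

lemma green_exists_target {F : Type*} [Field F]
    (hF3 : ∃ x y z : F, x ≠ y ∧ x ≠ z ∧ y ≠ z) (h p : F[X]) (hp : Prime p) :
    ∃ t : F[X], ¬ p ∣ (1 + h * t) ∧ ¬ p ∣ (1 + h + h * t) := by
  classical
  by_cases hph : p ∣ h
  · refine ⟨0, ?_, ?_⟩
    · rw [mul_zero, add_zero]; exact hp.not_dvd_one
    · rw [mul_zero, add_zero]
      intro hd
      exact hp.not_dvd_one (by simpa using dvd_sub hd hph)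
  · -- work modulo p
    haveI : (Ideal.span {p} : Ideal F[X]).IsPrime :=
      (Ideal.span_singleton_prime hp.ne_zero).mpr hp
    set K := F[X] ⧸ Ideal.span {p}
    set mkp : F[X] →+* K := Ideal.Quotient.mk (Ideal.span {p})
    have hmk : ∀ c : F[X], ¬ p ∣ c ↔ mkp c ≠ 0 := fun c => by
      rw [Ne, Ideal.Quotient.eq_zero_iff_mem, Ideal.mem_span_singleton]
    have hb0 : mkp h ≠ 0 := (hmk h).mp hph
    set hb := mkp h with hhb
    have hinj : Function.Injective (fun w : F => mkp (C w)) := by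
      have : Function.Injective (mkp.comp (C : F →+* F[X])) := RingHom.injective _
      exact this
    have c1 : ∀ v w : K, 1 + hb * v = 0 → 1 + hb * w = 0 → v = w := by
      intro v w hv hw
      have h1 : hb * v = hb * w := by
        have hv' : hb * v = -1 := by linear_combination hv
        have hw' : hb * w = -1 := by linear_combination hw
        rw [hv', hw']
      exact mul_left_cancel₀ hb0 h1
    have c2 : ∀ v w : K, 1 + hb + hb * v = 0 → 1 + hb + hb * w = 0 → v = w := by
      intro v w hv hw
      have h1 : hb * v = hb * w := by
        have hv' : hb * v = -(1 + hb) := by linear_combination hv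
        have hw' : hb * w = -(1 + hb) := by linear_combination hw
        rw [hv', hw']
      exact mul_left_cancel₀ hb0 h1
    obtain ⟨x, y, z, hxy, hxz, hyz⟩ := hF3
    have main : ∃ w : F, 1 + hb * mkp (C w) ≠ 0 ∧ 1 + hb + hb * mkp (C w) ≠ 0 := by
      by_contra hcon
      push_neg at hcon
      have key : ∀ w : F, 1 + hb * mkp (C w) = 0 ∨ 1 + hb + hb * mkp (C w) = 0 := by
        intro w
        by_cases h0 : 1 + hb * mkp (C w) = 0
        · exact Or.inl h0
        · exact Or.inr (hcon w h0)
      rcases key x with h1|h1 <;> rcases key y with h2|h2 <;> rcases key z with h3|h3 <;>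
        first
          | exact hxy (hinj (c1 _ _ h1 h2))
          | exact hxz (hinj (c1 _ _ h1 h3))
          | exact hyz (hinj (c1 _ _ h2 h3))
          | exact hxy (hinj (c2 _ _ h1 h2))
          | exact hxz (hinj (c2 _ _ h1 h3))
          | exact hyz (hinj (c2 _ _ h2 h3))
    obtain ⟨w, hw1, hw2⟩ := main
    refine ⟨C w, ?_, ?_⟩
    · rw [hmk]
      intro h0
      apply hw1
      rw [← h0, map_add, map_mul, map_one]
    · rw [hmk]
      intro h0
      apply hw2
      rw [← h0, map_add, map_add, map_mul, map_one]

lemma green_exists_unit_shift {f : F[X]} (hf : f ≠ 0)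
    (hF3 : ∃ x y z : F, x ≠ y ∧ x ≠ z ∧ y ≠ z) (h : F[X]) :
    ∃ s : F[X], IsCoprime (1 + h * s) f ∧ IsCoprime (1 + h + h * s) f := by
  classical
  have key : ∀ p : F[X], ∃ tp : F[X],
      p ∈ normalizedFactors f → (¬ p ∣ (1 + h * tp) ∧ ¬ p ∣ (1 + h + h * tp)) := by
    intro p
    by_cases hp : p ∈ normalizedFactors f
    · obtain ⟨tp, h1, h2⟩ := green_exists_target hF3 h p (prime_of_normalized_factor p hp)
      exact ⟨tp, fun _ => ⟨h1, h2⟩⟩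
    · exact ⟨0, fun h' => absurd h' hp⟩
  choose t ht using key
  obtain ⟨s, hs⟩ := green_crt hf t
  refine ⟨s, green_coprime_of_factors hf ?_, green_coprime_of_factors hf ?_⟩
  · intro p hp hdvd
    have hst := hs p hp
    have : p ∣ 1 + h * t p := by
      have : (1 + h * s) - h * (s - t p) = 1 + h * t p := by ring
      rw [← this]
      exact dvd_sub hdvd (Dvd.dvd.mul_left hst h)
    exact (ht p hp).1 this
  · intro p hp hdvd
    have hst := hs p hp
    have : p ∣ 1 + h + h * t p := by
      have : (1 + h + h * s) - h * (s - t p) = 1 + h + h * t p := by ring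
      rw [← this]
      exact dvd_sub hdvd (Dvd.dvd.mul_left hst h)
    exact (ht p hp).2 this

/-- Key step: if every unit stabilizing `A mod f` stabilizes `B mod f`, then
`f/gcd(B,f) ∣ f/gcd(A,f)`. -/
lemma green_hdvd_of_stab_subset {f : F[X]} (hf : f ≠ 0)
    (hF3 : ∃ x y z : F, x ≠ y ∧ x ≠ z ∧ y ≠ z) (A B : F[X])
    (hsub : ∀ u : (F[X] ⧸ Ideal.span {f})ˣ,
      (u : F[X] ⧸ Ideal.span {f}) * Ideal.Quotient.mk (Ideal.span {f}) A =
        Ideal.Quotient.mk (Ideal.span {f}) A →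
      (u : F[X] ⧸ Ideal.span {f}) * Ideal.Quotient.mk (Ideal.span {f}) B =
        Ideal.Quotient.mk (Ideal.span {f}) B) :
    f / EuclideanDomain.gcd B f ∣ f / EuclideanDomain.gcd A f := by
  classical
  set hA := f / EuclideanDomain.gcd A f with hhA
  set mk := Ideal.Quotient.mk (Ideal.span {f})
  obtain ⟨s, hc1, hc2⟩ := green_exists_unit_shift hf hF3 hA
  have zeroA : ∀ c : F[X], hA ∣ c → mk (c * A) = 0 := fun c hc =>
    (green_ann_iff hf A c).mpr hc
  have stab : ∀ c : F[X], hA ∣ c → mk (1 + c) * mk A = mk A := by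
    intro c hc
    rw [← map_mul, add_mul, one_mul, map_add, zeroA c hc, add_zero]
  have step : ∀ c : F[X], hA ∣ c → IsCoprime (1 + c) f → f / EuclideanDomain.gcd B f ∣ c := by
    intro c hc hcop
    obtain ⟨u, hu⟩ := green_isUnit_mk (f := f) hcop
    have h1 : (u : F[X] ⧸ Ideal.span {f}) * mk A = mk A := by
      rw [hu]; exact stab c hc
    have h2 := hsub u h1
    rw [hu, ← map_mul, add_mul, one_mul, map_add] at h2
    have : mk (c * B) = 0 := by
      have := congrArg (fun z => z - mk B) h2
      linear_combination h2
    exact (green_ann_iff hf B c).mp this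
  have d1 : f / EuclideanDomain.gcd B f ∣ hA * s :=
    step (hA * s) (Dvd.intro s rfl) hc1
  have d2 : f / EuclideanDomain.gcd B f ∣ hA + hA * s := by
    apply step (hA + hA * s) ⟨1 + s, by ring⟩
    rwa [← add_assoc]
  have := dvd_sub d2 d1
  simpa using this

/-- From associated cofactors we get one Green inequality. -/
lemma green_greenLe_of_assoc {f : F[X]} (hf : f ≠ 0) (A B : F[X])
    (hassoc : Associated (f / EuclideanDomain.gcd A f) (f / EuclideanDomain.gcd B f)) :
    GreenLe (Ideal.Quotient.mk (Ideal.span {f}) A) (Ideal.Quotient.mk (Ideal.span {f}) B) := by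
  classical
  set gA := EuclideanDomain.gcd A f with hgA
  set gB := EuclideanDomain.gcd B f with hgB
  set hA := f / gA with hhA
  set hB := f / gB with hhB
  have hgA0 : gA ≠ 0 := fun h0 => hf (EuclideanDomain.gcd_eq_zero_iff.mp h0).2
  have hgB0 : gB ≠ 0 := fun h0 => hf (EuclideanDomain.gcd_eq_zero_iff.mp h0).2
  have hfA : gA * hA = f := EuclideanDomain.mul_div_cancel' hgA0 (EuclideanDomain.gcd_dvd_right A f)
  have hfB : gB * hB = f := EuclideanDomain.mul_div_cancel' hgB0 (EuclideanDomain.gcd_dvd_right B f)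
  have hB0 : hB ≠ 0 := by
    intro h0
    rw [h0, mul_zero] at hfB
    exact hf hfB.symm
  obtain ⟨u, hu⟩ := hassoc
  -- hu : hA * u = hB
  have hgeq : gA = gB * u := by
    have h1 : gA * hB = gB * u * hB := by
      calc gA * hB = gA * (hA * u) := by rw [hu]
        _ = (gA * hA) * u := by ring
        _ = (gB * hB) * u := by rw [hfA, hfB]
        _ = gB * u * hB := by ring
    exact mul_right_cancel₀ hB0 h1
  obtain ⟨A', hA'⟩ : gA ∣ A := EuclideanDomain.gcd_dvd_left A f
  obtain ⟨x, y, hxy⟩ : ∃ x y : F[X], gB = B * x + f * y :=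
    ⟨_, _, EuclideanDomain.gcd_eq_gcd_ab B f⟩
  -- A = gA * A' = gB * u * A' = (B*x + f*y) * (u*A')
  have keyEq : A = B * (x * ((u : F[X]) * A')) + f * (y * ((u : F[X]) * A')) := by
    rw [hA', hgeq, hxy]; ring
  have hf0 : Ideal.Quotient.mk (Ideal.span {f}) f = 0 :=
    Ideal.Quotient.eq_zero_iff_mem.mpr (Ideal.mem_span_singleton_self f)
  right
  refine ⟨Ideal.Quotient.mk (Ideal.span {f}) (x * ((u : F[X]) * A')), ?_⟩
  conv_lhs => rw [keyEq]
  simp only [map_add, map_mul, hf0, zero_mul, add_zero]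

end Helpers

/-- Let `q > 2` be a prime power, `F` the finite field with `q` elements, `f` a
nonconstant monic polynomial over `F`, and `R = F[x]/(f)`.  For `a, b ∈ R`, one has
`a H b` in the Green's congruence of the multiplicative monoid of `R` if and only if
`St_U(a) = St_U(b)`, where `U` is the group of units of `R` and
`St_U(c) = {u ∈ U : u·c = c}`. -/
theorem greenEq_iff_stabilizer_eq (q : ℕ) (hq : IsPrimePow q) (hq2 : 2 < q)
    {F : Type*} [Field F] [Fintype F] (hcard : Fintype.card F = q)
    (f : Polynomial F) (hmonic : f.Monic) (hdeg : 0 < f.degree)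
    (a b : Polynomial F ⧸ Ideal.span {f}) :
    GreenEq a b ↔
      {u : (Polynomial F ⧸ Ideal.span {f})ˣ | (u : Polynomial F ⧸ Ideal.span {f}) * a = a}
        = {u : (Polynomial F ⧸ Ideal.span {f})ˣ |
            (u : Polynomial F ⧸ Ideal.span {f}) * b = b} := by
  classical
  letI : DecidableEq F := Classical.decEq F
  have hf : f ≠ 0 := hmonic.ne_zero
  constructor
  · rintro ⟨hab, hba⟩
    ext u
    simp only [Set.mem_setOf_eq]
    constructor
    · intro hu
      rcases hba with h | ⟨c, hc⟩
      · rw [h]; exact hu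
      · rw [hc, ← mul_assoc, hu]
    · intro hu
      rcases hab with h | ⟨c, hc⟩
      · rw [h]; exact hu
      · rw [hc, ← mul_assoc, hu]
  · intro hst
    have hF3 : ∃ x y z : F, x ≠ y ∧ x ≠ z ∧ y ≠ z := by
      rw [← Fintype.two_lt_card_iff, hcard]; exact hq2
    obtain ⟨A, hA⟩ := Ideal.Quotient.mk_surjective a
    obtain ⟨B, hB⟩ := Ideal.Quotient.mk_surjective b
    have hsub1 : ∀ u : (Polynomial F ⧸ Ideal.span {f})ˣ,
        (u : Polynomial F ⧸ Ideal.span {f}) * Ideal.Quotient.mk (Ideal.span {f}) A =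
          Ideal.Quotient.mk (Ideal.span {f}) A →
        (u : Polynomial F ⧸ Ideal.span {f}) * Ideal.Quotient.mk (Ideal.span {f}) B =
          Ideal.Quotient.mk (Ideal.span {f}) B := by
      intro u hu
      rw [hA] at hu; rw [hB]
      exact (Set.ext_iff.mp hst u).mp hu
    have hsub2 : ∀ u : (Polynomial F ⧸ Ideal.span {f})ˣ,
        (u : Polynomial F ⧸ Ideal.span {f}) * Ideal.Quotient.mk (Ideal.span {f}) B =
          Ideal.Quotient.mk (Ideal.span {f}) B →
        (u : Polynomial F ⧸ Ideal.span {f}) * Ideal.Quotient.mk (Ideal.span {f}) A =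
          Ideal.Quotient.mk (Ideal.span {f}) A := by
      intro u hu
      rw [hB] at hu; rw [hA]
      exact (Set.ext_iff.mp hst u).mpr hu
    have d1 := green_hdvd_of_stab_subset hf hF3 A B hsub1
    have d2 := green_hdvd_of_stab_subset hf hF3 B A hsub2
    have hassoc : Associated (f / EuclideanDomain.gcd A f) (f / EuclideanDomain.gcd B f) :=
      associated_of_dvd_dvd d2 d1
    rw [← hA, ← hB]
    exact ⟨green_greenLe_of_assoc hf A B hassoc, green_greenLe_of_assoc hf B A hassoc.symm⟩
end

section
/- Let F be a field, let f ∈ F[x] be a nonconstant monic polynomial, let p ∈ F[x] be a monic irreducible polynomial and m ≥ 1 an integer with p^m dividing f, and set h = f / p^m. Then for any ξ ∈ F with ξ ≠ 0 and ξ ≠ 1, at least one of the following holds: gcd(h + 1, f) = 1 or gcd(ξ·h + 1, f) = 1. -/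
open Polynomial

/-- Let `F` be a field, `f` a nonconstant monic polynomial, `p` a monic irreducible
polynomial, `m ≥ 1` with `p^m ∣ f`, and `h = f / p^m` (i.e. `f = p^m * h`).  Then for
any `ξ ∈ F` with `ξ ≠ 0` and `ξ ≠ 1`, either `gcd(h + 1, f) = 1` or
`gcd(ξ·h + 1, f) = 1` (i.e. one of the two is coprime to `f`). -/
theorem coprime_h_add_one_or_coprime_xi_h_add_one {F : Type*} [Field F]
    (f p h : Polynomial F) (hmonic : f.Monic) (hdeg : 0 < f.degree)
    (hpmonic : p.Monic) (hpirr : Irreducible p)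
    (m : ℕ) (hm : 1 ≤ m) (hfh : f = p ^ m * h)
    (ξ : F) (hξ0 : ξ ≠ 0) (hξ1 : ξ ≠ 1) :
    IsCoprime (h + 1) f ∨ IsCoprime (C ξ * h + 1) f := by
  classical
  by_contra hcon
  push_neg at hcon
  obtain ⟨h1, h2⟩ := hcon
  have hf0 : f ≠ 0 := hmonic.ne_zero
  have key : ∀ g : Polynomial F, ¬ IsCoprime (g * h + 1) f → p ∣ g * h + 1 := by
    intro g hnc
    have hgcd : ¬ IsUnit (EuclideanDomain.gcd (g * h + 1) f) := by
      intro hu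
      exact hnc (EuclideanDomain.gcd_isUnit_iff.mp hu)
    have hgcd0 : EuclideanDomain.gcd (g * h + 1) f ≠ 0 := by
      intro h0
      exact hf0 (EuclideanDomain.gcd_eq_zero_iff.mp h0).2
    obtain ⟨q, hqirr, hqdvd⟩ := WfDvdMonoid.exists_irreducible_factor hgcd hgcd0
    have hq1 : q ∣ g * h + 1 := hqdvd.trans (EuclideanDomain.gcd_dvd_left _ _)
    have hq2 : q ∣ f := hqdvd.trans (EuclideanDomain.gcd_dvd_right _ _)
    have hqprime : Prime q := hqirr.prime
    rw [hfh] at hq2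
    rcases hqprime.dvd_or_dvd hq2 with hqp | hqh
    · have hqp' : q ∣ p := hqprime.dvd_of_dvd_pow hqp
      have hassoc : Associated q p := hqirr.associated_of_dvd hpirr hqp'
      exact hassoc.symm.dvd.trans hq1
    · exfalso
      have : q ∣ 1 := by
        have : q ∣ (g * h + 1) - g * h := (dvd_sub hq1 (Dvd.dvd.mul_left hqh g))
        simpa using this
      exact hqirr.not_isUnit (isUnit_of_dvd_one this)
  have hp1 : p ∣ 1 * h + 1 := key 1 (by simpa using h1)
  have hp2 : p ∣ C ξ * h + 1 := key (C ξ) h2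
  have hdiff : p ∣ C (ξ - 1) := by
    have : p ∣ C ξ * (1 * h + 1) - (C ξ * h + 1) := dvd_sub (hp1.mul_left _) hp2
    have heq : C ξ * (1 * h + 1) - (C ξ * h + 1) = C (ξ - 1) := by
      rw [map_sub, map_one]; ring
    rwa [heq] at this
  have hunit : IsUnit (C (ξ - 1)) := isUnit_C.mpr (isUnit_iff_ne_zero.mpr (sub_ne_zero.mpr hξ1))
  exact hpirr.not_isUnit (isUnit_of_dvd_unit hdiff hunit)
end

section
/- Let F_q be a finite field, f a nonconstant monic polynomial in F_q[x] with irreducible factorization f = f_1^{n_1} ⋯ f_r^{n_r} into pairwise non-associate monic irreducibles, and R = F_q[x]/(f). Let c, a ∈ R with representing polynomials θ_c, θ_a ∈ F_q[x], and suppose that for every index i ∈ [1, r], either f_i^{n_i} divides θ_c, or f_i does not divide θ_a. Then there exists a unit u of R such that c·u = c·a in R. -/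
open Polynomial

/-- Let `F` be a finite field and `f = f₁^{n₁} ⋯ f_r^{n_r}` a nonconstant monic
polynomial over `F`, factored into powers of pairwise non-associate monic irreducible
polynomials, and let `R = F[x]/(f)`.  Let `c, a ∈ R` have representatives `θc, θa`, and
suppose that for each `i` either `fᵢ^{nᵢ} ∣ θc` or `fᵢ ∤ θa`.  Then there is a unit `u`
of `R` with `c·u = c·a`. -/
theorem exists_unit_mul_eq {F : Type*} [Field F] [Fintype F]
    (r : ℕ) (fi : Fin r → Polynomial F) (n : Fin r → ℕ)
    (hmon : ∀ i, (fi i).Monic) (hirr : ∀ i, Irreducible (fi i))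
    (hn : ∀ i, 1 ≤ n i)
    (hnonassoc : ∀ i j, i ≠ j → ¬ Associated (fi i) (fi j))
    (f : Polynomial F) (hf : f = ∏ i, fi i ^ n i) (hdeg : 0 < f.degree)
    (c a : Polynomial F ⧸ Ideal.span {f}) (θc θa : Polynomial F)
    (hc : Ideal.Quotient.mk (Ideal.span {f}) θc = c)
    (ha : Ideal.Quotient.mk (Ideal.span {f}) θa = a)
    (hyp : ∀ i, (fi i) ^ (n i) ∣ θc ∨ ¬ (fi i ∣ θa)) :
    ∃ u : (Polynomial F ⧸ Ideal.span {f})ˣ,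
      c * (u : Polynomial F ⧸ Ideal.span {f}) = c * a := by
  classical
  set S : Finset (Fin r) := Finset.univ.filter (fun i => fi i ∣ θa) with hS
  set g : Polynomial F := ∏ i ∈ S, fi i ^ n i with hg
  set h : Polynomial F := ∏ i ∈ Sᶜ, fi i ^ n i with hh
  have hgh : g * h = f := by
    rw [hg, hh, hf, Finset.prod_mul_prod_compl]
  -- g divides θc
  have hgc : g ∣ θc := by
    apply Finset.prod_dvd_of_coprime
    · intro i hi j hj hij
      simp only [Function.onFun]
      exact ((hirr i).coprime_iff_not_dvd.2 (fun hd =>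
        hnonassoc i j hij (associated_of_dvd_dvd hd
          ((hirr i).dvd_symm (hirr j) hd)))).pow
    · intro i hi
      rcases hyp i with h1 | h2
      · exact h1
      · exact absurd (Finset.mem_filter.mp hi).2 h2
  -- θu := θa + h is coprime to f
  set θu : Polynomial F := θa + h with hθu
  have hnotdvd : ∀ i, ¬ fi i ∣ θu := by
    intro i hdvd
    by_cases hiS : i ∈ S
    · have hia : fi i ∣ θa := (Finset.mem_filter.mp hiS).2
      have hih : fi i ∣ h := (dvd_add_right hia).mp hdvd
      have := (hirr i).prime.dvd_finset_prod_iff _ |>.mp hih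
      obtain ⟨j, hj, hij⟩ := this
      have hji : j ≠ i := fun e => (Finset.mem_compl.mp hj) (e ▸ hiS)
      have hdvdj : fi i ∣ fi j := (hirr i).prime.dvd_of_dvd_pow hij
      exact hnonassoc i j (fun e => hji e.symm)
        (associated_of_dvd_dvd hdvdj ((hirr i).dvd_symm (hirr j) hdvdj))
    · have hih : fi i ∣ h := by
        refine dvd_trans ?_ (Finset.dvd_prod_of_mem _ (Finset.mem_compl.mpr hiS))
        exact dvd_pow_self _ (Nat.one_le_iff_ne_zero.mp (hn i))
      have hia : fi i ∣ θa := (dvd_add_left hih).mp hdvd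
      exact hiS (Finset.mem_filter.mpr ⟨Finset.mem_univ i, hia⟩)
  have hcop : IsCoprime θu f := by
    rw [hf]
    apply IsCoprime.prod_right
    intro i _
    exact ((hirr i).coprime_iff_not_dvd.2 (hnotdvd i)).symm.pow_right
  -- mk θu is a unit
  obtain ⟨p, q, hpq⟩ := hcop
  set mk := Ideal.Quotient.mk (Ideal.span {f}) with hmk
  have hfz : mk f = 0 := by
    rw [hmk, Ideal.Quotient.eq_zero_iff_mem]
    exact Ideal.subset_span rfl
  have hunit : mk p * mk θu = 1 := by
    have := congrArg mk hpq
    simpa [map_add, map_mul, map_one, hfz] using this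
  refine ⟨Units.mkOfMulEqOne (mk θu) (mk p) (by rw [mul_comm]; exact hunit), ?_⟩
  -- c * mk θu = c * a
  have hch : mk θc * mk h = 0 := by
    rw [← map_mul, hmk, Ideal.Quotient.eq_zero_iff_mem, Ideal.mem_span_singleton]
    obtain ⟨t, ht⟩ := hgc
    exact ⟨t, by rw [ht, ← hgh]; ring⟩
  show c * mk θu = c * a
  rw [← hc, ← ha, hθu, map_add, mul_add, hch, add_zero]
end

section
/- Let F_2 be the field with two elements, and let f = x·(x+1)·g ∈ F_2[x] where g ∈ F_2[x] satisfies gcd(x·(x+1), g) = 1. Let R = F_2[x]/(f). Then D(S_R) ≥ D(U(S_R)) + 2, where S_R is the multiplicative semigroup of R and U(S_R) its group of units. -/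
open Polynomial

/-- A sequence (finite multiset) `T` over a commutative semigroup with identity is
reducible if it has a proper subsequence whose product equals the product of `T`. -/
def MulReducible {M : Type*} [CommMonoid M] (T : Multiset M) : Prop :=
  ∃ T' : Multiset M, T' ≤ T ∧ T' ≠ T ∧ T'.prod = T.prod

/-- The Davenport constant of a commutative semigroup with identity: the least positive
integer `ℓ` such that every sequence of length at least `ℓ` is reducible. -/
noncomputable def Davenport (M : Type*) [CommMonoid M] : ℕ :=
  sInf {n : ℕ | 1 ≤ n ∧ ∀ T : Multiset M, n ≤ Multiset.card T → MulReducible T}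

lemma aux_reducible_of_take_eq {M : Type*} [CommMonoid M] (l : List M) (i j : ℕ)
    (hij : i < j) (hj : j ≤ l.length)
    (hprod : (l.take i).prod = (l.take j).prod) : MulReducible (↑l : Multiset M) := by
  refine ⟨↑(l.take i ++ l.drop j), ?_, ?_, ?_⟩
  · refine Multiset.coe_le.2 (List.Sublist.subperm ?_)
    have h1 : List.Sublist (l.take i) (l.take j) := by
      have := List.take_sublist i (l.take j)
      rwa [List.take_take, min_eq_left hij.le] at this
    have h2 : List.Sublist (l.take i ++ l.drop j) (l.take j ++ l.drop j) := h1.append_right _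
    rwa [List.take_append_drop] at h2
  · intro h
    have := congrArg Multiset.card h
    simp only [Multiset.coe_card, List.length_append, List.length_take, List.length_drop] at this
    omega
  · show (l.take i ++ l.drop j : List M).prod = l.prod
    conv_rhs => rw [← List.take_append_drop j l]
    rw [List.prod_append, List.prod_append, hprod]

lemma aux_davenport_set_nonempty (M : Type*) [CommMonoid M] [Finite M] :
    ∃ n : ℕ, 1 ≤ n ∧ ∀ T : Multiset M, n ≤ Multiset.card T → MulReducible T := by
  cases nonempty_fintype M
  refine ⟨Fintype.card M + 1, Nat.succ_le_succ (Nat.zero_le _), ?_⟩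
  intro T
  induction T using Quotient.inductionOn with
  | h l =>
    intro hT
    rw [Multiset.quot_mk_to_coe, Multiset.coe_card] at hT
    have hcard : Fintype.card M < Fintype.card (Fin (l.length + 1)) := by
      simp only [Fintype.card_fin]; omega
    obtain ⟨x, y, hxy, hfxy⟩ :=
      Fintype.exists_ne_map_eq_of_card_lt (fun i : Fin (l.length + 1) => (l.take i).prod) hcard
    rcases hxy.lt_or_gt with h | h
    · exact aux_reducible_of_take_eq l x y h (by omega) hfxy
    · exact aux_reducible_of_take_eq l y x h (by omega) hfxy.symm

lemma aux_exists_irreducible (G : Type*) [CommMonoid G] :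
    ∃ S : Multiset G, Davenport G ≤ Multiset.card S + 1 ∧ ¬ MulReducible S := by
  by_cases h : Davenport G ≤ 1
  · exact ⟨0, by simpa using h, by rintro ⟨T', hle, hne, -⟩; exact hne (Multiset.le_zero.1 hle)⟩
  · push_neg at h
    have h2 : Davenport G - 1 < Davenport G := by omega
    have h3 := Nat.notMem_of_lt_sInf (show Davenport G - 1 < sInf _ from h2)
    simp only [Set.mem_setOf_eq, not_and, not_forall] at h3
    obtain ⟨T, hT, hirr⟩ := h3 (by omega)
    exact ⟨T, by omega, hirr⟩

lemma aux_le_of_le_map {α β : Type*} {f : α → β} {s : Multiset α} :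
    ∀ {C : Multiset β}, C ≤ s.map f → ∃ s' : Multiset α, s' ≤ s ∧ s'.map f = C := by
  classical
  induction s using Multiset.induction_on with
  | empty =>
    intro C hC
    have hC0 : C = 0 := by simpa using hC
    exact ⟨0, le_rfl, by simp [hC0]⟩
  | cons x s ih =>
    intro C hC
    by_cases hx : f x ∈ C
    · obtain ⟨C', rfl⟩ := Multiset.exists_cons_of_mem hx
      rw [Multiset.map_cons] at hC
      have hC' : C' ≤ s.map f := by
        have := Multiset.erase_le_erase (f x) hC
        simpa using this
      obtain ⟨s', hs', rfl⟩ := ih hC'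
      exact ⟨x ::ₘ s', Multiset.cons_le_cons _ hs', by simp⟩
    · have hC' : C ≤ s.map f := by
        rw [Multiset.map_cons] at hC
        exact (Multiset.le_cons_of_notMem hx).1 hC
      obtain ⟨s', hs', rfl⟩ := ih hC'
      exact ⟨s', hs'.trans (Multiset.le_cons_self _ _), rfl⟩

lemma aux_zmod2_unit {x : ZMod 2} (h : IsUnit x) : x = 1 := by
  rcases (show ∀ y : ZMod 2, y = 0 ∨ y = 1 by decide) x with rfl | rfl
  · exact absurd (isUnit_zero_iff.1 h) (by decide)
  · rfl

lemma aux_isUnit_multiset_prod {α : Type*} [CommMonoid α] (s : Multiset α)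
    (h : ∀ x ∈ s, IsUnit x) : IsUnit s.prod := by
  induction s using Multiset.induction_on with
  | empty => simp
  | cons a s ih =>
    rw [Multiset.prod_cons]
    exact (h a (Multiset.mem_cons_self _ _)).mul (ih fun x hx => h x (Multiset.mem_cons_of_mem hx))


/-- Let `f = x·(x+1)·g ∈ F₂[x]` with `gcd(x·(x+1), g) = 1`, and `R = F₂[x]/(f)`.
Then `D(S_R) ≥ D(U(S_R)) + 2`. -/
theorem davenport_ge_units_add_two (g : Polynomial (ZMod 2))
    (hg : IsCoprime (X * (X + 1)) g) :
    Davenport ((Polynomial (ZMod 2) ⧸ Ideal.span {X * (X + 1) * g})ˣ) + 2 ≤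
      Davenport (Polynomial (ZMod 2) ⧸ Ideal.span {X * (X + 1) * g}) := by
  classical
  set f : Polynomial (ZMod 2) := X * (X + 1) * g with hf
  set R := Polynomial (ZMod 2) ⧸ Ideal.span {f} with hR
  -- nonzero-ness
  have hXne : (X : Polynomial (ZMod 2)) ≠ 0 := X_ne_zero
  have hgne : g ≠ 0 := by
    rintro rfl
    exact not_isUnit_X (isUnit_of_mul_isUnit_left (isCoprime_zero_right.mp hg))
  have hX1ne : (X + 1 : Polynomial (ZMod 2)) ≠ 0 := by
    intro h
    have := congrArg (eval 0) h
    simp at this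
  have hfne : f ≠ 0 := mul_ne_zero (mul_ne_zero hXne hX1ne) hgne
  have hfin : Finite R := by
    have pb := AdjoinRoot.powerBasis hfne
    have h1 : Module.Finite (ZMod 2) (AdjoinRoot f) := pb.finite
    have h2 : Finite (AdjoinRoot f) := Module.finite_of_finite (ZMod 2)
    exact h2
  -- coprimality pieces
  have hone : (1 : Polynomial (ZMod 2)) + 1 = 0 := by
    rw [← Polynomial.C_1, ← Polynomial.C_add]
    norm_num
    decide
  have hone' : (1 : ZMod 2) + 1 = 0 := by decide
  have hpq : IsCoprime (X : Polynomial (ZMod 2)) (X + 1) :=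
    ⟨1, 1, by linear_combination X * hone⟩
  have hXg : IsCoprime (X : Polynomial (ZMod 2)) g := hg.of_mul_left_left
  have hX1g : IsCoprime (X + 1 : Polynomial (ZMod 2)) g := hg.of_mul_left_right
  obtain ⟨A, hgA, hA0, hA1⟩ :
      ∃ A : Polynomial (ZMod 2), g ∣ A - 1 ∧ A.eval 0 = 0 ∧ A.eval 1 = 1 := by
    obtain ⟨u, v, huv⟩ := hpq.mul_right hXg
    refine ⟨u * X, ⟨(X + 1) * (-v), by linear_combination huv⟩, by simp, ?_⟩
    have : u * X = 1 - v * ((X + 1) * g) := by linear_combination huv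
    rw [this]
    simp [hone']
  obtain ⟨B, hgB, hB0, hB1⟩ :
      ∃ B : Polynomial (ZMod 2), g ∣ B - 1 ∧ B.eval 0 = 1 ∧ B.eval 1 = 0 := by
    obtain ⟨u', v', hu'v'⟩ := hpq.symm.mul_right hX1g
    refine ⟨u' * (X + 1), ⟨X * (-v'), by linear_combination hu'v'⟩, ?_, by simp [hone']⟩
    have : u' * (X + 1) = 1 - v' * (X * g) := by linear_combination hu'v'
    rw [this]
    simp
  -- evaluation ring homs on the quotient
  have hmem0 : ∀ r ∈ Ideal.span {f}, (evalRingHom (0 : ZMod 2)) r = 0 := by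
    intro r hr
    rw [Ideal.mem_span_singleton] at hr
    obtain ⟨t, rfl⟩ := hr
    simp [hf]
  have hmem1 : ∀ r ∈ Ideal.span {f}, (evalRingHom (1 : ZMod 2)) r = 0 := by
    intro r hr
    rw [Ideal.mem_span_singleton] at hr
    obtain ⟨t, rfl⟩ := hr
    simp [hf, hone']
  set φ0 : R →+* ZMod 2 := Ideal.Quotient.lift _ (evalRingHom 0) hmem0 with hφ0
  set φ1 : R →+* ZMod 2 := Ideal.Quotient.lift _ (evalRingHom 1) hmem1 with hφ1
  set mk : Polynomial (ZMod 2) →+* R := Ideal.Quotient.mk (Ideal.span {f}) with hmk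
  have hφ0mk : ∀ t : Polynomial (ZMod 2), φ0 (mk t) = t.eval 0 := fun t => rfl
  have hφ1mk : ∀ t : Polynomial (ZMod 2), φ1 (mk t) = t.eval 1 := fun t => rfl
  set a : R := mk A with ha
  set b : R := mk B with hb
  -- units evaluate to 1 under φ0, φ1
  have hφ0u : ∀ x : R, IsUnit x → φ0 x = 1 := by
    intro x hx
    rcases (show ∀ y : ZMod 2, y = 0 ∨ y = 1 by decide) (φ0 x) with h | h
    · exact absurd (isUnit_zero_iff.1 (h ▸ hx.map φ0)) (by decide)
    · exact h
  have hφ1u : ∀ x : R, IsUnit x → φ1 x = 1 := by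
    intro x hx
    rcases (show ∀ y : ZMod 2, y = 0 ∨ y = 1 by decide) (φ1 x) with h | h
    · exact absurd (isUnit_zero_iff.1 (h ▸ hx.map φ1)) (by decide)
    · exact h
  have hab : a ≠ b := by
    intro h
    have : φ0 a = φ0 b := congrArg φ0 h
    rw [ha, hb, hφ0mk, hφ0mk, hA0, hB0] at this
    exact absurd this (by decide)
  -- key cancellation lemma
  have hkey : ∀ w : Rˣ, a * b * (w : R) = a * b → w = 1 := by
    intro w hw
    obtain ⟨h, hh⟩ := Ideal.Quotient.mk_surjective (I := Ideal.span {f}) (w : R)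
    have hXdvd : X ∣ (h - 1) := by
      have h0 : h.eval 0 = 1 := by
        have := hφ0u (w : R) w.isUnit
        rw [← hh, hφ0mk] at this
        exact this
      rw [Polynomial.X_dvd_iff, Polynomial.coeff_sub, ← Polynomial.coeff_zero_eq_eval_zero] at *
      simp [h0]
    have hX1dvd : (X + 1 : Polynomial (ZMod 2)) ∣ (h - 1) := by
      have h1 : h.eval 1 = 1 := by
        have := hφ1u (w : R) w.isUnit
        rw [← hh, hφ1mk] at this
        exact this
      have heq : (X - Polynomial.C 1 : Polynomial (ZMod 2)) = X + 1 := by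
        rw [Polynomial.C_1]
        linear_combination -hone
      rw [← heq]
      exact Polynomial.dvd_iff_isRoot.2 (by simp [Polynomial.IsRoot, h1])
    have hgdvd : g ∣ (h - 1) := by
      have hfd : f ∣ A * B * h - A * B := by
        rw [← Ideal.mem_span_singleton, ← Ideal.Quotient.eq]
        show mk (A * B * h) = mk (A * B)
        rw [map_mul, map_mul, hh, ← ha, ← hb]
        exact hw
      have hgf : g ∣ f := ⟨X * (X + 1), by rw [hf]; ring⟩
      have hgd : g ∣ (A * B) * (h - 1) := by
        have : (A * B) * (h - 1) = A * B * h - A * B := by ring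
        rw [this]
        exact hgf.trans hfd
      obtain ⟨t, ht⟩ := hgA
      obtain ⟨t', ht'⟩ := hgB
      have hcopA : IsCoprime g A := ⟨-t, 1, by linear_combination ht⟩
      have hcopB : IsCoprime g B := ⟨-t', 1, by linear_combination ht'⟩
      exact (hcopA.mul_right hcopB).dvd_of_dvd_mul_left hgd
    have hfdvd : f ∣ h - 1 := hg.mul_dvd (hpq.mul_dvd hXdvd hX1dvd) hgdvd
    have hw1 : mk h = mk 1 := Ideal.Quotient.eq.2 (Ideal.mem_span_singleton.2 hfdvd)
    rw [map_one, hh] at hw1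
    exact Units.val_eq_one.mp hw1
  -- build the irreducible sequence
  obtain ⟨S, hScard, hSirr⟩ := aux_exists_irreducible Rˣ
  set M : Multiset R := S.map (Units.coeHom R) with hM
  have hMunits : ∀ x ∈ M, IsUnit x := by
    intro x hx
    rw [hM, Multiset.mem_map] at hx
    obtain ⟨u0, -, rfl⟩ := hx
    exact u0.isUnit
  have hMprod : M.prod = ((S.prod : Rˣ) : R) := Multiset.prod_hom S (Units.coeHom R)
  have hMmax : ∀ M' ≤ M, M'.prod = M.prod → M' = M := by
    intro M' hle hprod
    rw [hM] at hle
    obtain ⟨S', hS'le, rfl⟩ := aux_le_of_le_map hle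
    have hprod' : ((S'.prod : Rˣ) : R) = ((S.prod : Rˣ) : R) := by
      rw [← hMprod, ← hprod]
      exact (Multiset.prod_hom S' (Units.coeHom R)).symm
    have hSS : S'.prod = S.prod := Units.ext hprod'
    have : S' = S := by
      by_contra hne
      exact hSirr ⟨S', hS'le, hne, hSS⟩
    rw [this]
  set T : Multiset R := a ::ₘ b ::ₘ M with hT
  have hTcard : Multiset.card T = Multiset.card S + 2 := by
    simp [hT, hM]
  have hTirr : ¬ MulReducible T := by
    rintro ⟨T', hle, hne, hprod⟩
    have haT' : a ∈ T' := by
      by_contra haT'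
      have h1 : φ0 T'.prod = 1 := by
        rw [← Multiset.prod_hom T' φ0]
        refine Multiset.prod_eq_one ?_
        intro y hy
        rw [Multiset.mem_map] at hy
        obtain ⟨z, hz, rfl⟩ := hy
        have hzT : z ∈ T := Multiset.mem_of_le hle hz
        rw [hT, Multiset.mem_cons, Multiset.mem_cons] at hzT
        rcases hzT with rfl | rfl | hzM
        · exact absurd hz haT'
        · rw [hb, hφ0mk, hB0]
        · exact hφ0u z (hMunits z hzM)
      have h0 : φ0 T.prod = 0 := by
        rw [hT, Multiset.prod_cons, map_mul, ha, hφ0mk, hA0, zero_mul]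
      rw [hprod, h0] at h1
      exact absurd h1 (by decide)
    have hbT' : b ∈ T' := by
      by_contra hbT'
      have h1 : φ1 T'.prod = 1 := by
        rw [← Multiset.prod_hom T' φ1]
        refine Multiset.prod_eq_one ?_
        intro y hy
        rw [Multiset.mem_map] at hy
        obtain ⟨z, hz, rfl⟩ := hy
        have hzT : z ∈ T := Multiset.mem_of_le hle hz
        rw [hT, Multiset.mem_cons, Multiset.mem_cons] at hzT
        rcases hzT with rfl | rfl | hzM
        · rw [ha, hφ1mk, hA1]
        · exact absurd hz hbT'
        · exact hφ1u z (hMunits z hzM)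
      have h0 : φ1 T.prod = 0 := by
        rw [hT, Multiset.prod_cons, Multiset.prod_cons, map_mul, map_mul, hφ1mk, hφ1mk,
          hA1, hB1]
        simp
      rw [hprod, h0] at h1
      exact absurd h1 (by decide)
    obtain ⟨T1, rfl⟩ := Multiset.exists_cons_of_mem haT'
    have hbT1 : b ∈ T1 := by
      rcases Multiset.mem_cons.1 hbT' with h | h
      · exact absurd h.symm hab
      · exact h
    obtain ⟨T2, rfl⟩ := Multiset.exists_cons_of_mem hbT1
    rw [hT] at hle
    have hT2le : T2 ≤ M := by
      rw [Multiset.cons_le_cons_iff, Multiset.cons_le_cons_iff] at hle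
      exact hle
    have hT2ne : T2 ≠ M := by
      rintro rfl
      exact hne hT
    have hT2units : ∀ x ∈ T2, IsUnit x := fun x hx => hMunits x (Multiset.mem_of_le hT2le hx)
    obtain ⟨u2, hu2⟩ := aux_isUnit_multiset_prod T2 hT2units
    obtain ⟨uM, huM⟩ := aux_isUnit_multiset_prod M hMunits
    have heq : a * b * (u2 : R) = a * b * (uM : R) := by
      have := hprod
      rw [hT, Multiset.prod_cons, Multiset.prod_cons, Multiset.prod_cons, Multiset.prod_cons,
        ← hu2, ← huM] at this
      rw [mul_assoc, mul_assoc]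
      exact this
    have hcancel : a * b * ((u2 * uM⁻¹ : Rˣ) : R) = a * b := by
      rw [Units.val_mul, ← mul_assoc, heq, mul_assoc, ← Units.val_mul, mul_inv_cancel,
        Units.val_one, mul_one]
    have : u2 * uM⁻¹ = 1 := hkey _ hcancel
    have hu2M : u2 = uM := by
      have := congrArg (· * uM) this
      simpa [mul_assoc] using this
    have hT2M : T2.prod = M.prod := by rw [← hu2, ← huM, hu2M]
    exact hT2ne (hMmax T2 hT2le hT2M)
  -- conclude
  refine le_csInf ?_ ?_
  · obtain ⟨n, hn1, hn2⟩ := aux_davenport_set_nonempty R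
    exact ⟨n, hn1, hn2⟩
  · rintro n ⟨hn1, hn2⟩
    by_contra hlt
    push_neg at hlt
    have hnle : n ≤ Multiset.card T := by
      have h2 : Davenport ((Polynomial (ZMod 2) ⧸ Ideal.span {f})ˣ) = Davenport Rˣ := rfl
      rw [h2] at hlt
      have := hScard
      have := hTcard
      omega
    exact hTirr (hn2 T hnle)
end

section
/- For any prime p > 2, let f ∈ F_p[x] be a nonconstant polynomial that factors into a product of pairwise non-associate irreducible polynomials (i.e., f is squarefree), and let R = F_p[x]/(f). Then D(S_R) = D(U(S_R)), where S_R denotes the multiplicative semigroup of R and U(S_R) its group of units. -/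
namespace DavAux

def DavSet (M : Type*) [CommMonoid M] : Set ℕ :=
  {n : ℕ | 1 ≤ n ∧ ∀ T : Multiset M, n ≤ Multiset.card T → MulReducible T}

variable {M : Type*} [CommMonoid M]

lemma davenport_eq : Davenport M = sInf (DavSet M) := rfl

lemma mulReducible_add_right {T S : Multiset M} (h : MulReducible T) :
    MulReducible (T + S) := by
  obtain ⟨T', hle, hne, hprod⟩ := h
  exact ⟨T' + S, add_le_add_left hle S, fun hc => hne (add_right_cancel hc),
    by simp [Multiset.prod_add, hprod]⟩

lemma not_reducible_of_le {T U : Multiset M} (hU : U ≤ T) (h : ¬ MulReducible T) :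
    ¬ MulReducible U := by
  intro hr
  apply h
  classical
  have : T = U + (T - U) := (add_tsub_cancel_of_le hU).symm
  rw [this]
  exact mulReducible_add_right hr

lemma not_reducible_zero : ¬ MulReducible (0 : Multiset M) := by
  rintro ⟨T', hle, hne, -⟩
  exact hne (Multiset.le_zero.mp hle)

lemma davSet_upward {n m : ℕ} (hn : n ∈ DavSet M) (hm : n ≤ m) : m ∈ DavSet M :=
  ⟨le_trans hn.1 hm, fun T hT => hn.2 T (le_trans hm hT)⟩

lemma reducible_of_card_ge [Fintype M] {T : Multiset M}
    (h : Fintype.card M ≤ Multiset.card T) : MulReducible T := by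
  classical
  obtain ⟨l, rfl⟩ : ∃ l : List M, (l : Multiset M) = T := ⟨T.toList, T.coe_toList⟩
  have hlen : Fintype.card M ≤ l.length := by simpa using h
  -- prefix products
  have : Fintype.card M < Fintype.card (Fin (l.length + 1)) := by simp; omega
  obtain ⟨i, j, hij, hprod⟩ :=
    Fintype.exists_ne_map_eq_of_card_lt (fun k : Fin (l.length + 1) => (l.take k).prod) this
  wlog hlt : (i : ℕ) < (j : ℕ) generalizing i j
  · exact this j i hij.symm hprod.symm (by omega)
  have hij' : (i : ℕ) ≤ l.length ∧ (j : ℕ) ≤ l.length := ⟨by omega, by omega⟩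
  have h1 : (l.take i).Sublist (l.take j) := by
    have := List.take_sublist (i : ℕ) (l.take j)
    rwa [List.take_take, min_eq_left (by omega)] at this
  have hsub : (l.take (i:ℕ) ++ l.drop (j:ℕ)).Sublist l := by
    conv_rhs => rw [← List.take_append_drop (j : ℕ) l]
    exact List.Sublist.append h1 (List.Sublist.refl _)
  refine ⟨((l.take (i:ℕ) ++ l.drop (j:ℕ) : List M) : Multiset M), ?_, ?_, ?_⟩
  · exact Multiset.coe_le.mpr hsub.subperm
  · intro hc
    have := congrArg Multiset.card hc
    simp [List.length_take, List.length_drop] at this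
    omega
  · show (l.take (i:ℕ) ++ l.drop (j:ℕ)).prod = l.prod
    conv_rhs => rw [← List.take_append_drop (j : ℕ) l]
    simp [List.prod_append, hprod]

end DavAux

namespace DavAux
variable {M : Type*} [CommMonoid M]

lemma davSet_nonempty [Finite M] : (DavSet M).Nonempty := by
  have : Fintype M := Fintype.ofFinite M
  exact ⟨max 1 (Fintype.card M), le_max_left _ _,
    fun T hT => reducible_of_card_ge (le_trans (le_max_right _ _) hT)⟩

lemma davenport_mem [Finite M] : Davenport M ∈ DavSet M :=
  Nat.sInf_mem davSet_nonempty

lemma davenport_pos [Finite M] : 1 ≤ Davenport M := (davenport_mem (M := M)).1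

lemma davenport_reducible [Finite M] {T : Multiset M}
    (h : Davenport M ≤ Multiset.card T) : MulReducible T :=
  (davenport_mem (M := M)).2 T h

lemma lt_davenport_of_not_reducible [Finite M] {T : Multiset M}
    (h : ¬ MulReducible T) : Multiset.card T < Davenport M := by
  by_contra hc
  exact h (davenport_reducible (le_of_not_gt hc))

lemma exists_nonreducible [Finite M] :
    ∃ T : Multiset M, Multiset.card T = Davenport M - 1 ∧ ¬ MulReducible T := by
  rcases Nat.eq_or_lt_of_le (davenport_pos (M := M)) with h1 | h2
  · exact ⟨0, by simp [← h1], not_reducible_zero⟩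
  · have hnot : Davenport M - 1 ∉ DavSet M := Nat.notMem_of_lt_sInf (by
      rw [davenport_eq] at h2 ⊢; omega)
    rw [DavSet, Set.mem_setOf_eq, not_and_or] at hnot
    rcases hnot with h | h
    · omega
    · push_neg at h
      obtain ⟨T, hT, hnr⟩ := h
      refine ⟨(T.toList.take (Davenport M - 1) : List M), ?_, ?_⟩
      · simp; omega
      · refine not_reducible_of_le ?_ hnr
        have : ((T.toList.take (Davenport M - 1) : List M) : Multiset M) ≤ (T.toList : Multiset M) :=
          Multiset.coe_le.mpr (List.take_sublist _ _).subperm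
      
        simpa [T.coe_toList] using this

/-- Pull a sub-multiset of a mapped multiset back. -/
lemma exists_le_map {α β : Type*} {f : α → β} :
    ∀ {T : Multiset α} {V : Multiset β}, V ≤ T.map f → ∃ U, U ≤ T ∧ U.map f = V := by
  classical
  intro T
  induction T using Multiset.induction with
  | empty => intro V h; simp only [Multiset.map_zero, Multiset.le_zero] at h
             exact ⟨0, le_refl _, by simp [h]⟩
  | cons a T ih =>
    intro V h
    rw [Multiset.map_cons] at h
    by_cases hfa : f a ∈ V
    · obtain ⟨V', rfl⟩ := Multiset.exists_cons_of_mem hfa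
      have hV' : V' ≤ T.map f := by
        rwa [Multiset.cons_le_cons_iff] at h
      obtain ⟨U, hU, rfl⟩ := ih hV'
      exact ⟨a ::ₘ U, Multiset.cons_le_cons a hU, by simp⟩
    · have hV : V ≤ T.map f := by
        rw [Multiset.le_iff_count] at h ⊢
        intro x
        have := h x
        rcases eq_or_ne x (f a) with rfl | hx
        · simpa [Multiset.count_eq_zero_of_notMem hfa] using Nat.zero_le _
        · simpa [Multiset.count_cons_of_ne hx] using this
      obtain ⟨U, hU, rfl⟩ := ih hV
      exact ⟨U, le_trans hU (Multiset.le_cons_self _ _), rfl⟩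

/-- Reducibility transfers along injective prod-preserving maps; here: MulEquiv. -/
lemma davSet_subset_of_mulEquiv {N : Type*} [CommMonoid N] (e : M ≃* N) {n : ℕ}
    (hn : n ∈ DavSet M) : n ∈ DavSet N := by
  refine ⟨hn.1, fun T hT => ?_⟩
  have hcard : n ≤ Multiset.card (T.map e.symm) := by simpa using hT
  obtain ⟨U, hle, hne, hprod⟩ := hn.2 _ hcard
  refine ⟨U.map e, ?_, ?_, ?_⟩
  · have := Multiset.map_le_map (f := (e : M → N)) hle
    simpa [Multiset.map_map, Function.comp] using this
  · intro hc
    apply hne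
    have := congrArg (Multiset.map (e.symm : N → M)) hc
    simpa [Multiset.map_map, Function.comp] using this
  · have h1 : (U.map e).prod = e U.prod := Multiset.prod_hom U e.toMonoidHom
    have h2 : (T.map (e.symm : N → M)).prod = e.symm T.prod :=
      Multiset.prod_hom T e.symm.toMonoidHom
    rw [h1, hprod, h2]
    simp

lemma davenport_congr {N : Type*} [CommMonoid N] (e : M ≃* N) :
    Davenport M = Davenport N := by
  rw [davenport_eq, davenport_eq]
  congr 1
  ext n
  exact ⟨davSet_subset_of_mulEquiv e, davSet_subset_of_mulEquiv e.symm⟩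

lemma davenport_units_le [Finite M] : Davenport Mˣ ≤ Davenport M := by
  have hmem : Davenport M ∈ DavSet Mˣ := by
    obtain ⟨h1, h2⟩ := davenport_mem (M := M)
    refine ⟨h1, fun T hT => ?_⟩
    have hcard : Davenport M ≤ Multiset.card (T.map (Units.val : Mˣ → M)) := by simpa using hT
    obtain ⟨V, hle, hne, hprod⟩ := h2 _ hcard
    obtain ⟨U, hU, rfl⟩ := exists_le_map hle
    refine ⟨U, hU, ?_, ?_⟩
    · rintro rfl; exact hne rfl
    · apply Units.ext
      have h1 : (U.map (Units.val : Mˣ → M)).prod = (U.prod : M) :=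
        Multiset.prod_hom U (Units.coeHom M)
      have h2 : (T.map (Units.val : Mˣ → M)).prod = (T.prod : M) :=
        Multiset.prod_hom T (Units.coeHom M)
      rw [← h1, ← h2]; exact hprod
  rw [davenport_eq]
  exact Nat.sInf_le hmem

end DavAux

namespace DavAux

lemma dav_pi_ge {ι : Type*} [Fintype ι] [DecidableEq ι] (G : ι → Type*)
    [∀ i, CommGroup (G i)] [∀ i, Finite (G i)] [∀ i, Nontrivial (G i)] (S : Finset ι) :
    Davenport (∀ i : S, G i) + Sᶜ.card ≤ Davenport (∀ i, G i) := by
  classical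
  obtain ⟨W, hWcard, hWnr⟩ := exists_nonreducible (M := ∀ i : S, G i)
  choose c hc using fun i => exists_ne (1 : G i)
  let φ : (∀ i : S, G i) →* (∀ i, G i) :=
    { toFun := fun x i => if h : i ∈ S then x ⟨i, h⟩ else 1
      map_one' := by funext i; by_cases h : i ∈ S <;> simp [h]
      map_mul' := fun x y => by funext i; by_cases h : i ∈ S <;> simp [h] }
  have hφ_apply : ∀ (x : ∀ i : S, G i) (i : ι), φ x i = if h : i ∈ S then x ⟨i, h⟩ else 1 :=
    fun _ _ => rfl
  have hφinj : Function.Injective φ := by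
    intro x y hxy
    funext i
    have := congrFun hxy (i : ι)
    rw [hφ_apply, hφ_apply, dif_pos i.2, dif_pos i.2] at this
    simpa using this
  let e : ι → (∀ i, G i) := fun j => Pi.mulSingle j (c j)
  have heinj : Function.Injective e := by
    intro j k hjk
    by_contra hne
    have := congrFun hjk j
    rw [show e j j = c j from Pi.mulSingle_eq_same j (c j),
      show e k j = 1 from Pi.mulSingle_eq_of_ne hne (c k)] at this
    exact hc j this
  set E : Multiset (∀ i, G i) := Sᶜ.val.map e with hE
  set W' : Multiset (∀ i, G i) := W.map φ + E with hW'
  -- evaluation of products at a coordinate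
  have heval : ∀ (X : Multiset (∀ i, G i)) (j : ι),
      X.prod j = (X.map (fun x => x j)).prod := by
    intro X j
    exact (Multiset.prod_hom X (Pi.evalMonoidHom G j)).symm
  have hEprodfun : E.prod = ∏ k ∈ Sᶜ, Pi.mulSingle k (c k) :=
    (Finset.prod_eq_multiset_prod Sᶜ e).symm
  have hEprod : ∀ j ∈ Sᶜ, E.prod j = c j := by
    intro j hj
    rw [hEprodfun, Finset.prod_apply]
    exact (Finset.prod_eq_single_of_mem j hj fun b _ hbj =>
      Pi.mulSingle_eq_of_ne (Ne.symm hbj) (c b)).trans (Pi.mulSingle_eq_same j (c j))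
  have hmapφ_one : ∀ j ∉ S, ∀ x ∈ W.map φ, x j = 1 := by
    intro j hj x hx
    obtain ⟨w, -, rfl⟩ := Multiset.mem_map.mp hx
    rw [hφ_apply, dif_neg hj]
  -- W' is not reducible
  have hnr : ¬ MulReducible W' := by
    rintro ⟨V, hVle, hVne, hVprod⟩
    have hmemV : ∀ j ∈ Sᶜ, e j ∈ V := by
      intro j hj
      have hjS : j ∉ S := Finset.mem_compl.mp hj
      have hWj : W'.prod j = c j := by
        rw [hW', Multiset.prod_add]
        have h1 : (W.map φ).prod j = 1 := by
          rw [heval]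
          apply Multiset.prod_eq_one
          intro x hx
          obtain ⟨y, hy, rfl⟩ := Multiset.mem_map.mp hx
          exact hmapφ_one j hjS y hy
        rw [Pi.mul_apply, h1, one_mul, hEprod j hj]
      by_contra hne
      have hall : ∀ x ∈ V, x j = 1 := by
        intro x hx
        have hxW' : x ∈ W' := Multiset.mem_of_le hVle hx
        rw [hW', Multiset.mem_add] at hxW'
        rcases hxW' with h | h
        · exact hmapφ_one j hjS x h
        · obtain ⟨k, hk, rfl⟩ := Multiset.mem_map.mp h
          rcases eq_or_ne k j with rfl | hkj
          · exact absurd hx hne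
          · exact Pi.mulSingle_eq_of_ne (Ne.symm hkj) (c k)
      have : V.prod j = 1 := by
        rw [heval]
        apply Multiset.prod_eq_one
        intro x hx
        obtain ⟨y, hy, rfl⟩ := Multiset.mem_map.mp hx
        exact hall y hy
      rw [hVprod, hWj] at this
      exact hc j this
    have hEnodup : E.Nodup := (Finset.nodup _).map heinj
    have hEleV : E ≤ V := by
      rw [Multiset.le_iff_count]
      intro x
      by_cases hx : x ∈ E
      · obtain ⟨j, hj, rfl⟩ := Multiset.mem_map.mp hx
        have h1 : Multiset.count (e j) E ≤ 1 := Multiset.nodup_iff_count_le_one.mp hEnodup _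
        have h2 : 1 ≤ Multiset.count (e j) V :=
          Multiset.one_le_count_iff_mem.mpr (hmemV j hj)
        omega
      · rw [Multiset.count_eq_zero_of_notMem hx]; exact Nat.zero_le _
    set V1 : Multiset (∀ i, G i) := V - E with hV1def
    have hVdecomp : V = E + V1 := (add_tsub_cancel_of_le hEleV).symm
    have hV1le : V1 ≤ W.map φ := by
      have h1 : V - E ≤ (W.map φ + E) - E := tsub_le_tsub_right (hW' ▸ hVle) E
      rwa [add_tsub_cancel_right] at h1
    obtain ⟨W1, hW1le, hW1map⟩ := exists_le_map hV1le
    have hprodV1 : V1.prod = (W.map φ).prod := by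
      have h1 : E.prod * V1.prod = (W.map φ).prod * E.prod := by
        rw [← Multiset.prod_add, ← hVdecomp, ← Multiset.prod_add, ← hW']
        exact hVprod
      rw [mul_comm] at h1
      exact mul_right_cancel h1
    have hprodW1 : W1.prod = W.prod := by
      apply hφinj
      rw [← Multiset.prod_hom W1 φ, ← Multiset.prod_hom W φ, hW1map]
      exact hprodV1
    have hW1ne : W1 ≠ W := by
      rintro rfl
      apply hVne
      rw [hVdecomp, ← hW1map, hW', add_comm]
    exact hWnr ⟨W1, hW1le, hW1ne, hprodW1⟩
  have hlt := lt_davenport_of_not_reducible hnr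
  have hcardW' : Multiset.card W' = (Davenport (∀ i : S, G i) - 1) + Sᶜ.card := by
    rw [hW', Multiset.card_add, Multiset.card_map, hWcard, hE, Multiset.card_map]
    rfl
  have hpos := davenport_pos (M := ∀ i : S, G i)
  omega

end DavAux

namespace DavAux

/-- Units of a product are the product of units. -/
def piUnits {ι : Type*} (F : ι → Type*) [∀ i, Monoid (F i)] :
    (∀ i, F i)ˣ ≃* ∀ i, (F i)ˣ where
  toFun u i := ⟨u.val i, u.inv i, congrFun u.val_inv i, congrFun u.inv_val i⟩
  invFun x := ⟨fun i => (x i : F i), fun i => (((x i)⁻¹ : (F i)ˣ) : F i),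
    funext fun i => Units.mul_inv (x i), funext fun i => Units.inv_mul (x i)⟩
  left_inv u := Units.ext rfl
  right_inv x := funext fun i => Units.ext rfl
  map_mul' u v := funext fun i => Units.ext rfl

lemma finset_val_le {α : Type*} {s : Finset α} {T : Multiset α}
    (h : ∀ x ∈ s, x ∈ T) : s.val ≤ T := by
  classical
  rw [Multiset.le_iff_count]
  intro x
  by_cases hx : x ∈ s
  · have h1 : Multiset.count x s.val ≤ 1 := Multiset.nodup_iff_count_le_one.mp s.nodup x
    have h2 : 1 ≤ Multiset.count x T := Multiset.one_le_count_iff_mem.mpr (h x hx)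
    omega
  · rw [Multiset.count_eq_zero_of_notMem (by simpa using hx)]
    exact Nat.zero_le _

lemma dav_pi_fields {ι : Type*} [Fintype ι] (F : ι → Type*)
    [∀ i, CommRing (F i)] [∀ i, NoZeroDivisors (F i)] [∀ i, Nontrivial (F i)]
    [∀ i, Finite (F i)] [∀ i, Nontrivial (F i)ˣ]
    (hfield : ∀ i, ∀ x : F i, x ≠ 0 → IsUnit x) :
    Davenport (∀ i, F i) = Davenport ((∀ i, F i)ˣ) := by
  classical
  refine le_antisymm ?_ davenport_units_le
  set D := Davenport ((∀ i, F i)ˣ) with hD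
  have hDeq : D = Davenport (∀ i, (F i)ˣ) := davenport_congr (piUnits F)
  have hD1 : 1 ≤ D := davenport_pos
  have heval : ∀ (X : Multiset (∀ i, F i)) (j : ι),
      X.prod j = (X.map (fun x => x j)).prod := fun X j =>
    (Multiset.prod_hom X (Pi.evalMonoidHom F j)).symm
  have hmain : ∀ T : Multiset (∀ i, F i), D ≤ Multiset.card T → MulReducible T := by
    intro T hT
    set Z : Finset ι := Finset.univ.filter (fun i => T.prod i = 0) with hZ
    set S : Finset ι := Zᶜ with hS
    have hScompl : Sᶜ = Z := compl_compl Z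
    have hDS : Davenport (∀ i : S, (F i)ˣ) + Z.card ≤ D := by
      rw [hDeq]
      have := dav_pi_ge (fun i => (F i)ˣ) S
      rwa [hScompl] at this
    -- pick witnesses of zeros
    have hz' : ∀ j : ι, ∃ a : ∀ i, F i, j ∈ Z → (a ∈ T ∧ a j = 0) := by
      intro j
      by_cases hj : j ∈ Z
      · have hprod0 : T.prod j = 0 := (Finset.mem_filter.mp hj).2
        rw [heval] at hprod0
        have h0 : (0 : F j) ∈ T.map (fun x => x j) := Multiset.prod_eq_zero_iff.mp hprod0
        obtain ⟨a, ha, ha0⟩ := Multiset.mem_map.mp h0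
        exact ⟨a, fun _ => ⟨ha, ha0⟩⟩
      · exact ⟨1, fun h => absurd h hj⟩
    choose g hg using hz'
    set T0 : Multiset (∀ i, F i) := (Z.image g).val with hT0
    have hT0le : T0 ≤ T := finset_val_le (by
      intro x hx
      obtain ⟨j, hj, rfl⟩ := Finset.mem_image.mp hx
      exact (hg j hj).1)
    have hT0card : Multiset.card T0 ≤ Z.card := Finset.card_image_le
    set T1 : Multiset (∀ i, F i) := T - T0 with hT1def
    have hT1 : T = T0 + T1 := (add_tsub_cancel_of_le hT0le).symm
    have hT1mem : ∀ a ∈ T1, a ∈ T := fun a ha => Multiset.mem_of_le tsub_le_self ha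
    have hT1card : Davenport (∀ i : S, (F i)ˣ) ≤ Multiset.card T1 := by
      have := congrArg Multiset.card hT1
      rw [Multiset.card_add] at this
      omega
    -- all entries of terms of T are nonzero on S
    have hunit : ∀ a ∈ T, ∀ i : S, a (i : ι) ≠ 0 := by
      intro a ha i h0
      have hiS : (i : ι) ∈ S := i.2
      have hnz : T.prod (i : ι) ≠ 0 := by
        intro hc
        have hmem : (i : ι) ∈ Z := Finset.mem_filter.mpr ⟨Finset.mem_univ _, hc⟩
        exact (Finset.mem_compl.mp hiS) hmem
      apply hnz
      rw [heval]
      exact Multiset.prod_eq_zero (Multiset.mem_map.mpr ⟨a, ha, h0⟩)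
    set π : (∀ i, F i) → (∀ i : S, (F ↑i)ˣ) := fun a i =>
      if h : IsUnit (a (i : ι)) then h.unit else 1 with hπ
    have hπcoe : ∀ a ∈ T, ∀ i : S, ((π a i : F ↑i)) = a ↑i := by
      intro a ha i
      rw [hπ]
      simp only
      rw [dif_pos (hfield _ _ (hunit a ha i))]
      exact IsUnit.unit_spec _
    -- product of mapped sequence computes coordinates
    have hUprod : ∀ U : Multiset (∀ i, F i), (∀ a ∈ U, a ∈ T) → ∀ i : S,
        U.prod (i : ι) = (((U.map π).prod i : (F ↑i)ˣ) : F ↑i) := by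
      intro U hU i
      have hψ : (((U.map π).prod i : (F ↑i)ˣ) : F ↑i) =
          ((U.map π).map (fun x => ((x i : (F ↑i)ˣ) : F ↑i))).prod := by
        exact (Multiset.prod_hom (U.map π)
          ((Units.coeHom (F ↑i)).comp (Pi.evalMonoidHom (fun j : S => (F ↑j)ˣ) i))).symm
      rw [hψ, Multiset.map_map, heval]
      apply congrArg
      apply Multiset.map_congr rfl
      intro a ha
      exact (hπcoe a (hU a ha) i).symm
    -- reduce T1 in the unit group over S
    have hred : MulReducible (T1.map π) :=
      davenport_reducible (by rwa [Multiset.card_map])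
    obtain ⟨V, hVle, hVne, hVprod⟩ := hred
    obtain ⟨T1', hT1'le, hT1'map⟩ := exists_le_map hVle
    have hT1'ne : T1' ≠ T1 := by
      rintro rfl
      exact hVne hT1'map.symm
    have hcardlt : Multiset.card T1' < Multiset.card T1 :=
      Multiset.card_lt_card (lt_of_le_of_ne hT1'le hT1'ne)
    refine ⟨T0 + T1', ?_, ?_, ?_⟩
    · calc T0 + T1' ≤ T0 + T1 := add_le_add_right hT1'le T0
        _ = T := hT1.symm
    · intro hc
      have := congrArg Multiset.card hc
      rw [Multiset.card_add, hT1, Multiset.card_add] at this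
      omega
    · funext i
      by_cases hi : i ∈ Z
      · have h2 : T.prod i = 0 := (Finset.mem_filter.mp hi).2
        rw [h2, Multiset.prod_add, Pi.mul_apply]
        have h0 : T0.prod i = 0 := by
          rw [heval]
          refine Multiset.prod_eq_zero (Multiset.mem_map.mpr ⟨g i, ?_, (hg i hi).2⟩)
          exact Finset.mem_image_of_mem g hi
        rw [h0, zero_mul]
      · have hiS : i ∈ S := Finset.mem_compl.mpr hi
        have hkey : T1'.prod i = T1.prod i := by
          have h1 := hUprod T1' (fun a ha => hT1mem a (Multiset.mem_of_le hT1'le ha)) ⟨i, hiS⟩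
          have h2 := hUprod T1 hT1mem ⟨i, hiS⟩
          rw [h1, h2, hT1'map, hVprod]
        conv_rhs => rw [hT1]
        rw [Multiset.prod_add, Multiset.prod_add, Pi.mul_apply, Pi.mul_apply, hkey]

  rw [davenport_eq]
  exact Nat.sInf_le ⟨hD1, hmain⟩

end DavAux

namespace DavAux

lemma nontrivial_units_of_isField {K : Type*} [CommRing K] (hK : IsField K) [Finite K]
    (h3 : 3 ≤ Nat.card K) : Nontrivial Kˣ := by
  haveI : Nontrivial K := ⟨hK.exists_pair_ne⟩
  have hx : ∃ x : K, x ≠ 0 ∧ x ≠ 1 := by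
    by_contra hc
    push_neg at hc
    have hsurj : Function.Surjective (fun b : Bool => if b then (1 : K) else 0) := by
      intro x
      rcases eq_or_ne x 0 with rfl | h0
      · exact ⟨false, rfl⟩
      · exact ⟨true, (hc x h0).symm⟩
    have := Nat.card_le_card_of_surjective _ hsurj
    simp [Nat.card_eq_fintype_card] at this
    omega
  obtain ⟨x, hx0, hx1⟩ := hx
  obtain ⟨y, hy⟩ := hK.mul_inv_cancel hx0
  refine ⟨⟨x, y, hy, by rwa [mul_comm]⟩, 1, fun hc => hx1 ?_⟩
  have := congrArg Units.val hc
  simpa using this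

end DavAux

set_option maxHeartbeats 2000000 in
set_option synthInstance.maxHeartbeats 800000 in
open DavAux in
/-- For a prime `p > 2` and a nonconstant squarefree polynomial `f ∈ F_p[x]`
(i.e. `f` is a product of pairwise non-associate irreducible polynomials), the
multiplicative semigroup `S_R` of `R = F_p[x]/(f)` satisfies `D(S_R) = D(U(S_R))`. -/
theorem davenport_quotient_squarefree (p : ℕ) (hp : p.Prime) (hp2 : 2 < p)
    (f : Polynomial (ZMod p)) (hdeg : 0 < f.degree) (hsf : Squarefree f) :
    Davenport (Polynomial (ZMod p) ⧸ Ideal.span {f}) =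
      Davenport ((Polynomial (ZMod p) ⧸ Ideal.span {f})ˣ) := by
  haveI : Fact p.Prime := ⟨hp⟩
  classical
  set R := Polynomial (ZMod p) ⧸ Ideal.span {f} with hR
  have hf0 : f ≠ 0 := fun h => by simp [h] at hdeg
  have hfu : ¬ IsUnit f := Polynomial.not_isUnit_of_degree_pos f hdeg
  haveI : Nontrivial R := Ideal.Quotient.nontrivial_iff.mpr (by
    rwa [Ne, Ideal.span_singleton_eq_top])
  haveI hRfin : Finite R := by
    have pb := AdjoinRoot.powerBasis hf0
    haveI := pb.finite
    have : Finite (AdjoinRoot f) := Module.finite_of_finite (ZMod p)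
    exact this
  haveI : IsArtinianRing R := isArtinian_of_finite
  haveI : IsReduced R := (Ideal.isRadical_iff_quotient_reduced _).mp
    (isRadical_iff_span_singleton.mp hsf.isRadical)
  set ι := {I : Ideal R | I.IsMaximal} with hι
  haveI : Finite ι := (IsArtinianRing.setOfPred_isMaximal_finite R).to_subtype
  haveI : Fintype ι := Fintype.ofFinite ι
  have hIsField : ∀ I : ι, IsField (R ⧸ I.1) :=
    fun I => (Ideal.Quotient.maximal_ideal_iff_isField_quotient I.1).mp I.2
  haveI hQfin : ∀ I : ι, Finite (R ⧸ I.1) := fun I =>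
    Finite.of_surjective (Ideal.Quotient.mk I.1) Ideal.Quotient.mk_surjective
  haveI hQnt : ∀ I : ι, Nontrivial (R ⧸ I.1) := fun I =>
    Ideal.Quotient.nontrivial_iff.mpr I.2.ne_top
  haveI hQnzd : ∀ I : ι, NoZeroDivisors (R ⧸ I.1) := by
    intro I
    haveI : I.1.IsPrime := Ideal.IsMaximal.isPrime I.2
    haveI := Ideal.Quotient.isDomain I.1
    infer_instance
  have hcard3 : ∀ I : ι, 3 ≤ Nat.card (R ⧸ I.1) := by
    intro I
    haveI : Fintype (R ⧸ I.1) := Fintype.ofFinite _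
    haveI : Module.Finite (ZMod p) (R ⧸ I.1) := Module.Finite.of_finite
    have hcard : Fintype.card (R ⧸ I.1) =
        Fintype.card (ZMod p) ^ Module.finrank (ZMod p) (R ⧸ I.1) :=
      Module.card_eq_pow_finrank
    have hpos : 0 < Module.finrank (ZMod p) (R ⧸ I.1) := Module.finrank_pos
    rw [Nat.card_eq_fintype_card, hcard, ZMod.card]
    calc 3 ≤ p := hp2
      _ = p ^ 1 := (pow_one p).symm
      _ ≤ p ^ Module.finrank (ZMod p) (R ⧸ I.1) :=
        Nat.pow_le_pow_right (by omega) hpos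
  haveI hQu : ∀ I : ι, Nontrivial (R ⧸ I.1)ˣ := fun I =>
    nontrivial_units_of_isField (hIsField I) (hcard3 I)
  let σ : MaximalSpectrum R ≃ ι := { toFun := fun J => ⟨J.asIdeal, J.isMaximal⟩, invFun := fun I => ⟨I.1, I.2⟩, left_inv := fun _ => rfl, right_inv := fun _ => rfl }
  have e : R ≃* ∀ I : ι, R ⧸ I.1 := (IsArtinianRing.equivPi R).toMulEquiv.trans (RingEquiv.piCongrLeft (fun I : ι => R ⧸ I.1) σ).toMulEquiv
  have e1 : Davenport R = Davenport (∀ I : ι, R ⧸ I.1) := davenport_congr e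
  letI : CommRing R := inferInstance
  have e2 : Davenport Rˣ = Davenport ((∀ I : ι, R ⧸ I.1))ˣ :=
    davenport_congr (Units.mapEquiv e)
  rw [e1, e2]
  exact dav_pi_fields (fun I : ι => R ⧸ I.1)
    (fun I x hx => IsUnit.of_mul_eq_one _ ((hIsField I).mul_inv_cancel hx).choose_spec)
end

section
/- Every sequence of 2n − 1 elements in an additive finite abelian group of order n contains a zero-sum subsequence of length exactly n (Erdős–Ginzburg–Ziv theorem for finite abelian groups). -/
/-- Lift a submultiset of a mapped multiset. -/
lemma multiset_exists_of_le_map {α β : Type*} {f : α → β} {s : Multiset α}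
    {t : Multiset β} (h : t ≤ s.map f) : ∃ t' ≤ s, t'.map f = t := by
  classical
  induction s using Multiset.induction_on generalizing t with
  | empty =>
    simp only [Multiset.map_zero, Multiset.le_zero] at h
    exact ⟨0, le_rfl, by simp [h]⟩
  | cons a s ih =>
    rw [Multiset.map_cons] at h
    by_cases hfa : f a ∈ t
    · have h1 : t.erase (f a) ≤ s.map f := by
        rw [Multiset.erase_le_iff_le_cons]; exact h
      obtain ⟨t', ht', hmap⟩ := ih h1
      refine ⟨a ::ₘ t', Multiset.cons_le_cons a ht', ?_⟩
      rw [Multiset.map_cons, hmap, Multiset.cons_erase hfa]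
    · have h1 : t ≤ s.map f := by
        rw [Multiset.le_iff_count]
        intro b
        have := Multiset.le_iff_count.1 h b
        rw [Multiset.count_cons] at this
        rcases eq_or_ne b (f a) with rfl | hb
        · have : t.count (f a) = 0 := Multiset.count_eq_zero_of_notMem hfa
          omega
        · simpa [hb] using this
      obtain ⟨t', ht', hmap⟩ := ih h1
      exact ⟨t', ht'.trans (Multiset.le_cons_self s a), hmap⟩

lemma multiset_sum_sum {α : Type*} [AddCommMonoid α] (S : Multiset (Multiset α)) :
    S.sum.sum = (S.map Multiset.sum).sum := by
  induction S using Multiset.induction_on with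
  | empty => simp
  | cons a s ih => simp [ih]

lemma multiset_card_sum {α : Type*} (S : Multiset (Multiset α)) :
    Multiset.card S.sum = (S.map Multiset.card).sum := by
  induction S using Multiset.induction_on with
  | empty => simp
  | cons a s ih => simp [ih]

/-- Iterated extraction of blocks. -/
lemma extract_blocks {G : Type*} (P : Multiset G → Prop) (m : ℕ)
    (hext : ∀ S : Multiset G, 2 * m - 1 ≤ Multiset.card S →
      ∃ B ≤ S, Multiset.card B = m ∧ P B) :
    ∀ (k : ℕ) (S : Multiset G), k * m + (m - 1) ≤ Multiset.card S →
      ∃ C : Multiset (Multiset G), Multiset.card C = k ∧ C.sum ≤ S ∧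
        ∀ B ∈ C, Multiset.card B = m ∧ P B := by
  classical
  intro k
  induction k with
  | zero => exact fun S _ => ⟨0, by simp⟩
  | succ k ih =>
    intro S hS
    have hm : 2 * m - 1 ≤ Multiset.card S := by
      have := Nat.succ_mul k m ▸ hS
      omega
    obtain ⟨B, hBS, hBcard, hBP⟩ := hext S hm
    have hcard' : k * m + (m - 1) ≤ Multiset.card (S - B) := by
      rw [Multiset.card_sub hBS, hBcard]
      have := Nat.succ_mul k m ▸ hS
      omega
    obtain ⟨C, hCcard, hCsum, hCP⟩ := ih (S - B) hcard'
    refine ⟨B ::ₘ C, by simp [hCcard], ?_, ?_⟩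
    · rw [Multiset.sum_cons]
      calc B + C.sum ≤ B + (S - B) := add_le_add_right hCsum B
        _ = S := add_tsub_cancel_of_le hBS
    · intro B' hB'
      rcases Multiset.mem_cons.1 hB' with rfl | h
      · exact ⟨hBcard, hBP⟩
      · exact hCP B' h

/-- EGZ for a group additively isomorphic to `ZMod n`. -/
lemma egz_of_equiv_zmod {G : Type*} [AddCommGroup G] {n : ℕ} (e : G ≃+ ZMod n)
    (T : Multiset G) (hT : 2 * n - 1 ≤ Multiset.card T) :
    ∃ T' ≤ T, Multiset.card T' = n ∧ T'.sum = 0 := by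
  obtain ⟨t, hts, htcard, htsum⟩ :=
    ZMod.erdos_ginzburg_ziv_multiset (T.map e) (by simpa using hT)
  obtain ⟨T', hT'T, hmap⟩ := multiset_exists_of_le_map hts
  refine ⟨T', hT'T, ?_, ?_⟩
  · rw [← htcard, ← hmap, Multiset.card_map]
  · have hms : e T'.sum = (T'.map e).sum := by
      simpa using map_multiset_sum (e : G →+ ZMod n) T'
    have : e T'.sum = 0 := by rw [hms, hmap, htsum]
    simpa using congrArg e.symm this

lemma egz_aux : ∀ (n : ℕ) (G : Type u) (_ : AddCommGroup G) (_ : Fintype G),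
    Fintype.card G = n → ∀ T : Multiset G, 2 * n - 1 ≤ Multiset.card T →
    ∃ T' ≤ T, Multiset.card T' = n ∧ T'.sum = 0 := by
  intro n
  induction n using Nat.strong_induction_on with
  | _ n ih =>
  intro G _ _ hn T hT
  rcases Nat.lt_or_ge n 2 with hn2 | hn2
  · -- n = 0 or 1
    have hpos : 0 < n := hn ▸ Fintype.card_pos
    interval_cases n
    · obtain ⟨a, ha⟩ := Multiset.card_pos_iff_exists_mem.1 (by omega : 0 < Multiset.card T)
      have hsub : Subsingleton G := by
        have : Fintype.card G ≤ 1 := by omega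
        exact Fintype.card_le_one_iff_subsingleton.1 this
      exact ⟨{a}, by simpa using ha, by simp, by simp [Subsingleton.elim a 0]⟩
  · -- n ≥ 2
    have hp : (n.minFac).Prime := Nat.minFac_prime (by omega)
    haveI := Fact.mk hp
    set p := n.minFac with hpdef
    by_cases hnp : n = p
    · -- prime order: cyclic
      have hcyc : IsAddCyclic G := isAddCyclic_of_prime_card (p := p)
        (by rw [Nat.card_eq_fintype_card, hn, hnp])
      have e : ZMod n ≃+ G := by
        rw [← hn, ← Nat.card_eq_fintype_card]
        exact zmodAddCyclicAddEquiv hcyc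
      exact egz_of_equiv_zmod e.symm T hT
    · -- composite
      have hpn : p < n := lt_of_le_of_ne (Nat.minFac_le (by omega)) (Ne.symm hnp)
      have hpdvd : p ∣ n := Nat.minFac_dvd n
      obtain ⟨m, hm⟩ := hpdvd
      have hp2 : 2 ≤ p := hp.two_le
      have hm1 : 1 < m := by
        rcases Nat.lt_or_ge m 2 with h | h
        · interval_cases m <;> omega
        · omega
      have hmn : m < n := by
        calc m < p * m := by nlinarith
          _ = n := hm.symm
      -- Cauchy: element of order p
      obtain ⟨g, hg⟩ := exists_prime_addOrderOf_dvd_card p (by rw [hn]; exact Nat.minFac_dvd n)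
      set H := AddSubgroup.zmultiples g with hH
      haveI : Fintype (G ⧸ H) := Fintype.ofFinite _
      have hcardH : Fintype.card H = p := by
        rw [← Nat.card_eq_fintype_card, Nat.card_zmultiples, hg]
      have hcardQ : Fintype.card (G ⧸ H) = m := by
        have := AddSubgroup.card_eq_card_quotient_mul_card_addSubgroup (α := G) H
        simp only [Nat.card_eq_fintype_card] at this
        rw [hn, hm, hcardH] at this
        have hp0 : 0 < p := by omega
        exact Nat.eq_of_mul_eq_mul_right hp0 (by linarith [this])
      -- extraction of one block
      have hext : ∀ S : Multiset G, 2 * m - 1 ≤ Multiset.card S →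
          ∃ B ≤ S, Multiset.card B = m ∧ B.sum ∈ H := by
        intro S hS
        obtain ⟨t, hts, htcard, htsum⟩ := ih m hmn (G ⧸ H) inferInstance inferInstance hcardQ
          (S.map (QuotientAddGroup.mk' H)) (by simpa using hS)
        obtain ⟨B, hBS, hmap⟩ := multiset_exists_of_le_map hts
        refine ⟨B, hBS, by rw [← htcard, ← hmap, Multiset.card_map], ?_⟩
        have : (QuotientAddGroup.mk' H) B.sum = 0 := by
          rw [map_multiset_sum, hmap, htsum]
        rwa [QuotientAddGroup.mk'_apply, QuotientAddGroup.eq_zero_iff] at this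
      -- extract 2p-1 blocks
      obtain ⟨C, hCcard, hCsum, hCmem⟩ := extract_blocks (fun B => B.sum ∈ H) m hext
        (2 * p - 1) T (by
          have h := hT
          rw [hm] at h
          have h1 : (2 * p - 1) * m = 2 * p * m - m := by rw [Nat.sub_mul, one_mul]
          have h2 : 2 * m ≤ 2 * p * m := by nlinarith
          have h3 : 2 * p * m = 2 * (p * m) := by ring
          omega)
      -- apply IH to H with the block sums
      set f : {B // B ∈ C} → H := fun B => ⟨B.1.sum, (hCmem B.1 B.2).2⟩ with hf
      obtain ⟨t, hts, htcard, htsum⟩ := ih p hpn H inferInstance inferInstance hcardH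
        (C.attach.map f) (by simp [hCcard])
      obtain ⟨D, hDC, hmap⟩ := multiset_exists_of_le_map hts
      set D' : Multiset (Multiset G) := D.map Subtype.val with hD'
      have hD'C : D' ≤ C := by
        have := Multiset.map_le_map (f := Subtype.val) hDC
        rwa [Multiset.attach_map_val] at this
      refine ⟨D'.sum, ?_, ?_, ?_⟩
      · calc D'.sum ≤ C.sum := by
              obtain ⟨u, hu⟩ := Multiset.le_iff_exists_add.1 hD'C
              rw [hu, Multiset.sum_add]; exact le_add_of_nonneg_right zero_le
          _ ≤ T := hCsum
      · rw [multiset_card_sum]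
        have hrep : D'.map Multiset.card = Multiset.replicate p m := by
          apply Multiset.eq_replicate.2
          constructor
          · rw [Multiset.card_map, hD', Multiset.card_map,
              ← htcard, ← hmap, Multiset.card_map]
          · intro b hb
            obtain ⟨B, hB, rfl⟩ := Multiset.mem_map.1 hb
            exact (hCmem B (Multiset.mem_of_le hD'C hB)).1
        rw [hrep, Multiset.sum_replicate, smul_eq_mul, hm, mul_comm]
      · rw [multiset_sum_sum]
        have key : D'.map Multiset.sum = t.map Subtype.val := by
          rw [hD', Multiset.map_map, ← hmap, Multiset.map_map]
          rfl
        rw [key]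
        have hcoe := map_multiset_sum H.subtype t
        simp only [AddSubgroup.coe_subtype] at hcoe
        rw [show (Multiset.map Subtype.val t) = Multiset.map (fun x : H => (x : G)) t from rfl,
          ← hcoe, htsum]
        simp

/-- Erdős–Ginzburg–Ziv theorem for finite abelian groups: every sequence (finite
multiset) of `2n − 1` elements in an additive finite abelian group of order `n` contains
a zero-sum subsequence of length exactly `n`. -/
theorem erdos_ginzburg_ziv {G : Type*} [AddCommGroup G] [Fintype G]
    (n : ℕ) (hn : Fintype.card G = n)
    (T : Multiset G) (hT : Multiset.card T = 2 * n - 1) :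
    ∃ T' : Multiset G, T' ≤ T ∧ Multiset.card T' = n ∧ T'.sum = 0 := by
  obtain ⟨T', h1, h2, h3⟩ := egz_aux n G ‹_› ‹_› hn T (le_of_eq hT.symm)
  exact ⟨T', h1, h2, h3⟩
end
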